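/- arXiv:1911.00799 — 4 statements merged into one kernel-verified Lean document; each statement's English description precedes it below -/
import Mathlib

section
/- One-iteration inequality for SPDHG (Lemma 4.1, inequality (4.1)): for every k ≥ 1 and every x ∈ X, y ∈ Y, writing z = (x,y), z^k = (x^k, y^k), it holds that D_g(x^k; z) + D_{f^*}(ŷ^{k+1}; z) ≤ V_k(x^{k−1} − x, y^k − y) − E_k[V_{k+1}(x^k − x, y^{k+1} − y)] − V(z^k − z^{k−1}). -/
noncomputable section

open Finset

local notation "⟪" x ", " y "⟫" => @inner ℝ _ _ x y

/-- `v = prox_{t·h}(u)`: `v` minimizes `w ↦ h w + ‖w − u‖²/(2t)`. -/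
def IsProx {E : Type*} [NormedAddCommGroup E] [InnerProductSpace ℝ E]
    (t : ℝ) (h : E → ℝ) (u v : E) : Prop :=
  ∀ w, h v + ‖v - u‖ ^ 2 / (2 * t) ≤ h w + ‖w - u‖ ^ 2 / (2 * t)

/-- `A^⊤ y = ∑ i (A i)^* (y i)`. -/
def AT {X : Type*} [NormedAddCommGroup X] [InnerProductSpace ℝ X] [CompleteSpace X]
    {n : ℕ} {Y : Fin n → Type*} [∀ i, NormedAddCommGroup (Y i)]
    [∀ i, InnerProductSpace ℝ (Y i)] [∀ i, CompleteSpace (Y i)]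
    (A : ∀ i, X →L[ℝ] Y i) (y : ∀ i, Y i) : X :=
  ∑ i, (A i).adjoint (y i)

lemma polar3 {E : Type*} [NormedAddCommGroup E] [InnerProductSpace ℝ E] (a b c : E) :
    ⟪a - b, c - b⟫ = (‖a - b‖^2 + ‖c - b‖^2 - ‖a - c‖^2)/2 := by
  have h := norm_sub_sq_real (a - b) (c - b)
  rw [show (a-b) - (c-b) = a - c by abel] at h
  linarith

lemma sum_update_eq {n : ℕ} {Y : Fin n → Type*}
    (q : ∀ i, Y i → ℝ) (f : ∀ i, Y i) (l : Fin n) (b : Y l) :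
    ∑ i, q i (Function.update f l b i) = (∑ i, q i (f i)) + (q l b - q l (f l)) := by
  rw [← Finset.add_sum_erase _ (fun i => q i (Function.update f l b i)) (Finset.mem_univ l),
      ← Finset.add_sum_erase _ (fun i => q i (f i)) (Finset.mem_univ l)]
  simp only [Function.update_self]
  rw [Finset.sum_congr rfl (fun i hi => by
    rw [Function.update_of_ne (Finset.ne_of_mem_erase hi)])]
  ring

lemma prox_subgrad {E : Type*} [NormedAddCommGroup E] [InnerProductSpace ℝ E]
    {t : ℝ} (ht : 0 < t) {h : E → ℝ} (hconv : ConvexOn ℝ Set.univ h)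
    {u v : E} (hpx : IsProx t h u v) (w : E) :
    ⟪u - v, w - v⟫ ≤ t * (h w - h v) := by
  set c : ℝ := ⟪v - u, w - v⟫ with hc
  set nn : ℝ := ‖w - v‖ ^ 2 with hnn
  have hgoal : ⟪u - v, w - v⟫ = -c := by
    rw [hc, show u - v = -(v - u) by abel, inner_neg_left]
  rw [hgoal]
  refine le_of_forall_pos_le_add fun ε hε => ?_
  set θ : ℝ := min 1 (ε / (nn / 2 + 1)) with hθdef
  have hnn0 : 0 ≤ nn := by positivity
  have hθ0 : 0 < θ := lt_min one_pos (div_pos hε (by positivity))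
  have hθ1 : θ ≤ 1 := min_le_left _ _
  have hθε : θ * (nn / 2) ≤ ε := by
    calc θ * (nn / 2) ≤ (ε / (nn / 2 + 1)) * (nn / 2) :=
          mul_le_mul_of_nonneg_right (min_le_right _ _) (by positivity)
      _ ≤ ε := by
          rw [div_mul_eq_mul_div, div_le_iff₀ (by positivity)]
          nlinarith
  have h1 := hpx (v + θ • (w - v))
  have hcv : h (v + θ • (w - v)) ≤ (1 - θ) * h v + θ * h w := by
    have h2 := hconv.2 (Set.mem_univ v) (Set.mem_univ w)
      (by linarith : (0:ℝ) ≤ 1 - θ) hθ0.le (by ring)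
    have h3 : (1 - θ) • v + θ • w = v + θ • (w - v) := by
      rw [smul_sub, sub_smul, one_smul]; abel
    rw [h3] at h2
    simpa using h2
  have hnorm : ‖v + θ • (w - v) - u‖ ^ 2 = ‖v - u‖ ^ 2 + 2 * θ * c + θ ^ 2 * nn := by
    have h4 : v + θ • (w - v) - u = (v - u) + θ • (w - v) := by abel
    rw [h4, norm_add_sq_real, real_inner_smul_right, norm_smul, Real.norm_eq_abs,
      mul_pow, sq_abs]
    ring
  rw [hnorm] at h1
  have ht2 : (0:ℝ) < 2 * t := by linarith
  have h5 : h v * (2 * t) + ‖v - u‖ ^ 2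
      ≤ ((1 - θ) * h v + θ * h w) * (2 * t) + (‖v - u‖ ^ 2 + 2 * θ * c + θ ^ 2 * nn) := by
    have h6 : h v + ‖v - u‖ ^ 2 / (2 * t)
        ≤ ((1 - θ) * h v + θ * h w) + (‖v - u‖ ^ 2 + 2 * θ * c + θ ^ 2 * nn) / (2 * t) := by
      linarith
    have h7 := mul_le_mul_of_nonneg_right h6 ht2.le
    rw [add_mul, add_mul, div_mul_cancel₀ _ ht2.ne', div_mul_cancel₀ _ ht2.ne'] at h7
    linarith [h7]
  have h8 : 0 ≤ θ * ((h w - h v) * (2 * t) + 2 * c + θ * nn) := by nlinarith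
  have h9 : 0 ≤ (h w - h v) * (2 * t) + 2 * c + θ * nn :=
    nonneg_of_mul_nonneg_right h8 hθ0
  linarith

set_option maxHeartbeats 1000000 in
/-- One-iteration inequality for SPDHG (Lemma 4.1, inequality (4.1)).
At iteration `k`, given the previous iterates `x^{k−1} = xprev`, `y^{k−1} = yprev`,
`y^k = ycur`, the primal update `x^k = xcur = prox_{τ g}(x^{k−1} − τ A^⊤ ȳ^k)` with
`ȳ^k = y^k + P⁻¹(y^k − y^{k−1})`, and the full dual update
`ŷ^{k+1}_i = yh i = prox_{σ_i f_i^*}(y_i^k + σ_i A_i x^k)`, for every `z = (x, y)`: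
`D_g(x^k; z) + D_{f^*}(ŷ^{k+1}; z)
  ≤ V_k(x^{k−1} − x, y^k − y) − E_k[V_{k+1}(x^k − x, y^{k+1} − y)] − V(z^k − z^{k−1})`,
where `E_k` is the `p`-weighted average over the index `i_k` drawn at step `k`
(`y^{k+1}` updates only block `i_k` of `y^k` to `ŷ^{k+1}_{i_k}`). -/
theorem spdhg_one_iteration_inequality
    {X : Type*} [NormedAddCommGroup X] [InnerProductSpace ℝ X] [FiniteDimensional ℝ X]
    {n : ℕ} {Y : Fin n → Type*} [∀ i, NormedAddCommGroup (Y i)]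
    [∀ i, InnerProductSpace ℝ (Y i)] [∀ i, FiniteDimensional ℝ (Y i)]
    (g : X → ℝ) (fstar : ∀ i, Y i → ℝ)
    (hg : ConvexOn ℝ Set.univ g) (hfs : ∀ i, ConvexOn ℝ Set.univ (fstar i))
    (A : ∀ i, X →L[ℝ] Y i)
    (p σ : Fin n → ℝ) (τ γ : ℝ)
    (hp : ∀ i, 0 < p i) (hpsum : ∑ i, p i = 1)
    (hτ : 0 < τ) (hσ : ∀ i, 0 < σ i) (hγ0 : 0 < γ) (hγ1 : γ < 1)
    (hstep : ∀ i, (p i)⁻¹ * τ * σ i * ‖A i‖ ^ 2 ≤ γ ^ 2)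
    (xprev : X) (yprev ycur : ∀ i, Y i) (xcur : X)
    (hx : IsProx τ g
      (xprev - τ • AT A (fun j => ycur j + (p j)⁻¹ • (ycur j - yprev j))) xcur)
    (yh : ∀ i, Y i)
    (hyh : ∀ i, IsProx (σ i) (fstar i) (ycur i + σ i • A i xcur) (yh i)) :
    ∀ (x : X) (y : ∀ i, Y i),
      -- D_g(x^k; z) + D_{f^*}(ŷ^{k+1}; z)
      (g xcur - g x + ⟪AT A y, xcur - x⟫)
        + ((∑ i, fstar i (yh i)) - (∑ i, fstar i (y i)) - ∑ i, ⟪A i x, yh i - y i⟫)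
      ≤
      -- V_k(x^{k−1} − x, y^k − y)
      ((1 / 2) * (τ⁻¹ * ‖xprev - x‖ ^ 2)
        - (∑ i, (p i)⁻¹ * ⟪A i (xprev - x), ycur i - yprev i⟫)
        + (1 / 2) * (∑ i, (σ i * p i)⁻¹ * ‖ycur i - yprev i‖ ^ 2)
        + (1 / 2) * (∑ i, (σ i * p i)⁻¹ * ‖ycur i - y i‖ ^ 2))
      -- − E_k[V_{k+1}(x^k − x, y^{k+1} − y)]
      - (∑ l, p l *
          ((1 / 2) * (τ⁻¹ * ‖xcur - x‖ ^ 2)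
            - (∑ i, (p i)⁻¹ * ⟪A i (xcur - x),
                Function.update ycur l (yh l) i - ycur i⟫)
            + (1 / 2) * (∑ i, (σ i * p i)⁻¹ *
                ‖Function.update ycur l (yh l) i - ycur i‖ ^ 2)
            + (1 / 2) * (∑ i, (σ i * p i)⁻¹ *
                ‖Function.update ycur l (yh l) i - y i‖ ^ 2)))
      -- − V(z^k − z^{k−1})
      - ((1 / 2) * (τ⁻¹ * ‖xcur - xprev‖ ^ 2)
          + (1 / 2) * (∑ i, (σ i * p i)⁻¹ * ‖ycur i - yprev i‖ ^ 2)
          + ∑ i, (p i)⁻¹ * ⟪A i (xcur - xprev), ycur i - yprev i⟫) := by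
  intro x y
  have hpne : ∀ i, p i ≠ 0 := fun i => (hp i).ne'
  have hσne : ∀ i, σ i ≠ 0 := fun i => (hσ i).ne'
  have hAin : ∀ (w : ∀ i, Y i) (v : X), ⟪AT A w, v⟫ = ∑ i, ⟪A i v, w i⟫ := by
    intro w v
    rw [AT, sum_inner]
    exact Finset.sum_congr rfl fun i _ =>
      by rw [ContinuousLinearMap.adjoint_inner_left, real_inner_comm]
  -- the bar variable
  set ybar : ∀ i, Y i := fun j => ycur j + (p j)⁻¹ • (ycur j - yprev j) with hybar
  -- primal inequality
  have hgi : g xcur - g x + ⟪AT A y, xcur - x⟫ ≤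
      τ⁻¹ * ((‖xprev - x‖^2 - ‖xcur - xprev‖^2 - ‖xcur - x‖^2)/2)
      + ∑ i, (⟪A i (xcur - x), y i - ycur i⟫
          - (p i)⁻¹ * ⟪A i (xcur - x), ycur i - yprev i⟫) := by
    have h1 := prox_subgrad hτ hg hx x
    have e1 : ⟪(xprev - τ • AT A ybar) - xcur, x - xcur⟫
        = ⟪xprev - xcur, x - xcur⟫ - τ * ⟪AT A ybar, x - xcur⟫ := by
      rw [show (xprev - τ • AT A ybar) - xcur = (xprev - xcur) - τ • AT A ybar by abel,
        inner_sub_left, real_inner_smul_left]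
    have e2 : ⟪xprev - xcur, x - xcur⟫
        = -((‖xprev - x‖^2 - ‖xcur - xprev‖^2 - ‖xcur - x‖^2)/2) := by
      rw [polar3, norm_sub_rev xprev xcur, norm_sub_rev x xcur]
      ring
    have e4 : ⟪AT A ybar, x - xcur⟫ = -⟪AT A ybar, xcur - x⟫ := by
      rw [show x - xcur = -(xcur - x) by abel, inner_neg_right]
    have e3 : ∑ i, (⟪A i (xcur - x), y i - ycur i⟫
          - (p i)⁻¹ * ⟪A i (xcur - x), ycur i - yprev i⟫)
        = ⟪AT A y, xcur - x⟫ - ⟪AT A ybar, xcur - x⟫ := by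
      rw [hAin, hAin, ← Finset.sum_sub_distrib]
      refine Finset.sum_congr rfl fun i _ => ?_
      simp only [hybar, inner_sub_right, inner_add_right, real_inner_smul_right]
      ring
    rw [e1, e2, e4] at h1
    set Pv : ℝ := (‖xprev - x‖^2 - ‖xcur - xprev‖^2 - ‖xcur - x‖^2)/2 with hPv
    set Q : ℝ := ⟪AT A ybar, xcur - x⟫ with hQ
    rw [e3]
    -- h1 : -Pv - τ * -Q ≤ τ * (g x - g xcur)
    have h3 : τ * (g xcur - g x) ≤ τ * (τ⁻¹ * Pv - Q) := by
      have hττ : τ * τ⁻¹ = 1 := mul_inv_cancel₀ hτ.ne'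
      have : τ * (τ⁻¹ * Pv - Q) = Pv - τ * Q := by
        rw [mul_sub, ← mul_assoc, hττ, one_mul]
      rw [this]
      nlinarith [h1]
    have h4 : g xcur - g x ≤ τ⁻¹ * Pv - Q := le_of_mul_le_mul_left h3 hτ
    linarith
  -- dual inequality
  have hfi : ∀ i, fstar i (yh i) - fstar i (y i) - ⟪A i x, yh i - y i⟫ ≤
      (σ i)⁻¹ * ((‖ycur i - y i‖^2 - ‖yh i - ycur i‖^2 - ‖yh i - y i‖^2)/2)
      + ⟪A i (xcur - x), yh i - y i⟫ := by
    intro i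
    have h1 := prox_subgrad (hσ i) (hfs i) (hyh i) (y i)
    have e1 : ⟪(ycur i + σ i • A i xcur) - yh i, y i - yh i⟫
        = ⟪ycur i - yh i, y i - yh i⟫ + σ i * ⟪A i xcur, y i - yh i⟫ := by
      rw [show (ycur i + σ i • A i xcur) - yh i = (ycur i - yh i) + σ i • A i xcur by abel,
        inner_add_left, real_inner_smul_left]
    have e2 : ⟪ycur i - yh i, y i - yh i⟫
        = -((‖ycur i - y i‖^2 - ‖yh i - ycur i‖^2 - ‖yh i - y i‖^2)/2) := by
      rw [polar3, norm_sub_rev (ycur i) (yh i), norm_sub_rev (y i) (yh i)]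
      ring
    have e4 : ⟪A i xcur, y i - yh i⟫ = -⟪A i xcur, yh i - y i⟫ := by
      rw [show y i - yh i = -(yh i - y i) by abel, inner_neg_right]
    rw [e1, e2, e4] at h1
    set S : ℝ := (‖ycur i - y i‖^2 - ‖yh i - ycur i‖^2 - ‖yh i - y i‖^2)/2 with hS
    set R : ℝ := ⟪A i xcur, yh i - y i⟫ with hR
    have h3 : σ i * (fstar i (yh i) - fstar i (y i)) ≤ σ i * ((σ i)⁻¹ * S + R) := by
      have hσσ : σ i * (σ i)⁻¹ = 1 := mul_inv_cancel₀ (hσne i)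
      have : σ i * ((σ i)⁻¹ * S + R) = S + σ i * R := by
        rw [mul_add, ← mul_assoc, hσσ, one_mul]
      rw [this]
      nlinarith [h1]
    have h4 : fstar i (yh i) - fstar i (y i) ≤ (σ i)⁻¹ * S + R := le_of_mul_le_mul_left h3 (hσ i)
    have e5 : ⟪A i (xcur - x), yh i - y i⟫ = R - ⟪A i x, yh i - y i⟫ := by
      rw [map_sub, inner_sub_left]
    rw [e5]
    linarith
  -- closed form of the expectation sum
  have s1 : ∀ l, ∑ i, (p i)⁻¹ * ⟪A i (xcur - x), Function.update ycur l (yh l) i - ycur i⟫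
      = (p l)⁻¹ * ⟪A l (xcur - x), yh l - ycur l⟫ := by
    intro l
    rw [Finset.sum_eq_single_of_mem l (Finset.mem_univ l)]
    · rw [Function.update_self]
    · intro i _ hil
      rw [Function.update_of_ne hil, sub_self, inner_zero_right, mul_zero]
  have s2 : ∀ l, ∑ i, (σ i * p i)⁻¹ * ‖Function.update ycur l (yh l) i - ycur i‖^2
      = (σ l * p l)⁻¹ * ‖yh l - ycur l‖^2 := by
    intro l
    rw [Finset.sum_eq_single_of_mem l (Finset.mem_univ l)]
    · rw [Function.update_self]
    · intro i _ hil
      rw [Function.update_of_ne hil, sub_self, norm_zero]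
      ring
  have s3 : ∀ l, ∑ i, (σ i * p i)⁻¹ * ‖Function.update ycur l (yh l) i - y i‖^2
      = (∑ i, (σ i * p i)⁻¹ * ‖ycur i - y i‖^2)
        + ((σ l * p l)⁻¹ * ‖yh l - y l‖^2 - (σ l * p l)⁻¹ * ‖ycur l - y l‖^2) := by
    intro l
    exact sum_update_eq (fun i v => (σ i * p i)⁻¹ * ‖v - y i‖^2) ycur l (yh l)
  have hE : (∑ l, p l *
          ((1 / 2) * (τ⁻¹ * ‖xcur - x‖ ^ 2)
            - (∑ i, (p i)⁻¹ * ⟪A i (xcur - x),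
                Function.update ycur l (yh l) i - ycur i⟫)
            + (1 / 2) * (∑ i, (σ i * p i)⁻¹ *
                ‖Function.update ycur l (yh l) i - ycur i‖ ^ 2)
            + (1 / 2) * (∑ i, (σ i * p i)⁻¹ *
                ‖Function.update ycur l (yh l) i - y i‖ ^ 2)))
      = (1 / 2) * (τ⁻¹ * ‖xcur - x‖ ^ 2)
        - (∑ i, ⟪A i (xcur - x), yh i - ycur i⟫)
        + (1 / 2) * (∑ i, (σ i)⁻¹ * ‖yh i - ycur i‖ ^ 2)
        + ((1 / 2) * (∑ i, (σ i * p i)⁻¹ * ‖ycur i - y i‖ ^ 2)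
          + (1 / 2) * (∑ i, (σ i)⁻¹ * (‖yh i - y i‖ ^ 2 - ‖ycur i - y i‖ ^ 2))) := by
    have step : ∀ l ∈ Finset.univ, p l *
          ((1 / 2) * (τ⁻¹ * ‖xcur - x‖ ^ 2)
            - (∑ i, (p i)⁻¹ * ⟪A i (xcur - x),
                Function.update ycur l (yh l) i - ycur i⟫)
            + (1 / 2) * (∑ i, (σ i * p i)⁻¹ *
                ‖Function.update ycur l (yh l) i - ycur i‖ ^ 2)
            + (1 / 2) * (∑ i, (σ i * p i)⁻¹ *
                ‖Function.update ycur l (yh l) i - y i‖ ^ 2))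
        = p l * ((1 / 2) * (τ⁻¹ * ‖xcur - x‖ ^ 2))
          - ⟪A l (xcur - x), yh l - ycur l⟫
          + (1 / 2) * ((σ l)⁻¹ * ‖yh l - ycur l‖ ^ 2)
          + (p l * ((1 / 2) * (∑ i, (σ i * p i)⁻¹ * ‖ycur i - y i‖ ^ 2))
            + (1 / 2) * ((σ l)⁻¹ * (‖yh l - y l‖ ^ 2 - ‖ycur l - y l‖ ^ 2))) := by
      intro l _
      rw [s1 l, s2 l, s3 l]
      simp only [mul_inv]
      have h1 : p l * (p l)⁻¹ = 1 := mul_inv_cancel₀ (hpne l)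
      linear_combination (-⟪A l (xcur - x), yh l - ycur l⟫
        + (1/2) * ((σ l)⁻¹ * ‖yh l - ycur l‖ ^ 2)
        + (1/2) * ((σ l)⁻¹ * (‖yh l - y l‖ ^ 2 - ‖ycur l - y l‖ ^ 2))) * h1
    rw [Finset.sum_congr rfl step]
    simp only [Finset.sum_add_distrib, Finset.sum_sub_distrib, ← Finset.mul_sum,
      ← Finset.sum_mul]
    rw [hpsum]
    ring
  -- combine
  calc (g xcur - g x + ⟪AT A y, xcur - x⟫)
        + ((∑ i, fstar i (yh i)) - (∑ i, fstar i (y i)) - ∑ i, ⟪A i x, yh i - y i⟫)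
      = (g xcur - g x + ⟪AT A y, xcur - x⟫)
        + ∑ i, (fstar i (yh i) - fstar i (y i) - ⟪A i x, yh i - y i⟫) := by
        rw [Finset.sum_sub_distrib, Finset.sum_sub_distrib]
    _ ≤ (τ⁻¹ * ((‖xprev - x‖^2 - ‖xcur - xprev‖^2 - ‖xcur - x‖^2)/2)
        + ∑ i, (⟪A i (xcur - x), y i - ycur i⟫
            - (p i)⁻¹ * ⟪A i (xcur - x), ycur i - yprev i⟫))
        + ∑ i, ((σ i)⁻¹ * ((‖ycur i - y i‖^2 - ‖yh i - ycur i‖^2 - ‖yh i - y i‖^2)/2)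
            + ⟪A i (xcur - x), yh i - y i⟫) :=
        add_le_add hgi (Finset.sum_le_sum fun i _ => hfi i)
    _ = _ := by
        rw [hE]
        have hGH : (∑ i, (⟪A i (xcur - x), y i - ycur i⟫
              - (p i)⁻¹ * ⟪A i (xcur - x), ycur i - yprev i⟫))
            + (∑ i, ((σ i)⁻¹ * ((‖ycur i - y i‖^2 - ‖yh i - ycur i‖^2 - ‖yh i - y i‖^2)/2)
              + ⟪A i (xcur - x), yh i - y i⟫))
            = -(∑ i, (p i)⁻¹ * ⟪A i (xprev - x), ycur i - yprev i⟫)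
              - (∑ i, (p i)⁻¹ * ⟪A i (xcur - xprev), ycur i - yprev i⟫)
              + (∑ i, ⟪A i (xcur - x), yh i - ycur i⟫)
              - (1/2) * (∑ i, (σ i)⁻¹ * ‖yh i - ycur i‖ ^ 2)
              - (1/2) * (∑ i, (σ i)⁻¹ * (‖yh i - y i‖ ^ 2 - ‖ycur i - y i‖ ^ 2)) := by
          rw [← Finset.sum_add_distrib]
          have perI : ∀ i ∈ Finset.univ,
              (⟪A i (xcur - x), y i - ycur i⟫
                - (p i)⁻¹ * ⟪A i (xcur - x), ycur i - yprev i⟫)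
              + ((σ i)⁻¹ * ((‖ycur i - y i‖^2 - ‖yh i - ycur i‖^2 - ‖yh i - y i‖^2)/2)
                + ⟪A i (xcur - x), yh i - y i⟫)
              = -((p i)⁻¹ * ⟪A i (xprev - x), ycur i - yprev i⟫)
                - (p i)⁻¹ * ⟪A i (xcur - xprev), ycur i - yprev i⟫
                + ⟪A i (xcur - x), yh i - ycur i⟫
                - (1/2) * ((σ i)⁻¹ * ‖yh i - ycur i‖ ^ 2)
                - (1/2) * ((σ i)⁻¹ * (‖yh i - y i‖ ^ 2 - ‖ycur i - y i‖ ^ 2)) := by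
            intro i _
            simp only [map_sub, inner_sub_left, inner_sub_right]
            ring
          rw [Finset.sum_congr rfl perI]
          simp only [Finset.sum_add_distrib, Finset.sum_sub_distrib, Finset.sum_neg_distrib,
            ← Finset.mul_sum]
        linarith [hGH]
end
end

section
/- Fixed points of the SPDHG fixed-point operator are solutions (part of Lemma 4.2): if ((x(1),…,x(n)), (y(1),…,y(n))) is a fixed point of T, i.e. x̂(i) = x(i) and ŷ(i) = y(i) for all i, then each pair (x(i), y(i)) is a primal-dual solution, i.e. 0 ∈ A^⊤ y(i) + ∂g(x(i)) and 0 ∈ A x(i) − ∂f^*(y(i)). -/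
noncomputable section

open Finset

local notation "⟪" x ", " y "⟫" => @inner ℝ _ _ x y

/-- Convex subdifferential of `h` at `x`. -/
def subdiffAt {E : Type*} [NormedAddCommGroup E] [InnerProductSpace ℝ E]
    (h : E → ℝ) (x : E) : Set E :=
  {v | ∀ z, h x + ⟪v, z - x⟫ ≤ h z}

lemma prox_subdiff {E : Type*} [NormedAddCommGroup E] [InnerProductSpace ℝ E]

    {t : ℝ} (ht : 0 < t) {h : E → ℝ} (hh : ConvexOn ℝ Set.univ h)
    {u v : E} (hv : IsProx t h u v) : t⁻¹ • (u - v) ∈ subdiffAt h v := by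
  intro z
  rw [real_inner_smul_left]
  set a := ⟪u - v, z - v⟫ with ha
  set N := ‖z - v‖ ^ 2 with hN
  have hdiv : (0:ℝ) < 2 * t := by linarith
  have key : ∀ s : ℝ, 0 < s → s ≤ 1 →
      t⁻¹ * a ≤ (h z - h v) + s * N / (2 * t) := by
    intro s hs hs1
    have hconv := hh.2 (Set.mem_univ v) (Set.mem_univ z) (by linarith : (0:ℝ) ≤ 1 - s)
      (le_of_lt hs) (by ring)
    simp only [smul_eq_mul] at hconv
    have hprox := hv ((1 - s) • v + s • z)
    have hw : (1 - s) • v + s • z - u = (v - u) + s • (z - v) := by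
      rw [sub_smul, one_smul, smul_sub]; abel
    rw [hw, @norm_add_sq_real, real_inner_smul_right, norm_smul, mul_pow] at hprox
    have hnorm : ‖s‖ ^ 2 = s ^ 2 := by rw [Real.norm_eq_abs, sq_abs]
    rw [hnorm] at hprox
    have hiv : ⟪v - u, z - v⟫ = -a := by
      rw [ha, ← inner_neg_left]; congr 1; abel
    rw [hiv, ← hN] at hprox
    rw [show ‖v - u‖ ^ 2 + 2 * (s * -a) + s ^ 2 * N
        = ‖v - u‖ ^ 2 + (2 * (s * -a) + s ^ 2 * N) by ring, add_div] at hprox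
    -- now linear in the atoms ‖v-u‖²/(2t) and (2s(-a)+s²N)/(2t)
    have hstep : s * (h v - h z) ≤ (2 * (s * -a) + s ^ 2 * N) / (2 * t) := by
      nlinarith [hprox, hconv]
    have hstep2 : 2 * t * (s * (h v - h z)) ≤ 2 * (s * -a) + s ^ 2 * N := by
      rw [le_div_iff₀ hdiv] at hstep; linarith
    have hstep3 : s * (2 * t * (h v - h z)) ≤ s * (N * s - 2 * a) := by nlinarith
    have hstep4 : 2 * t * (h v - h z) ≤ N * s - 2 * a := le_of_mul_le_mul_left hstep3 hs
    have final : a ≤ (h z - h v) * t + s * N / 2 := by linarith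
    have ht' : t⁻¹ * a = a / t := by ring
    rw [ht', div_le_iff₀ ht, add_mul]
    have hid : s * N / (2 * t) * t = s * N / 2 := by field_simp
    rw [hid]; linarith
  have hC : (0:ℝ) ≤ N / (2 * t) := by positivity
  have hall : ∀ ε > (0:ℝ), t⁻¹ * a ≤ (h z - h v) + ε := by
    intro ε hε
    set C := N / (2 * t) with hCdef
    set s := min 1 (ε / (C + 1)) with hsdef
    have hspos : 0 < s := lt_min one_pos (by positivity)
    have hs1 : s ≤ 1 := min_le_left _ _
    have hk := key s hspos hs1
    have hsC : s * C ≤ ε := by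
      have h2 : s ≤ ε / (C + 1) := min_le_right _ _
      have h3 : s * C ≤ (ε / (C + 1)) * C := mul_le_mul_of_nonneg_right h2 hC
      have h4 : (ε / (C + 1)) * C ≤ ε := by
        rw [div_mul_eq_mul_div, div_le_iff₀ (by linarith : (0:ℝ) < C + 1)]
        nlinarith
      linarith
    have heq : s * N / (2 * t) = s * C := by rw [hCdef]; ring
    rw [heq] at hk
    linarith
  linarith [le_of_forall_pos_le_add hall]

/-- Fixed points of the SPDHG fixed-point operator are primal-dual solutions
(part of Lemma 4.2).  The operator `T` maps `(x(1),…,x(n),y(1),…,y(n))` to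
`(x̂(1),…,x̂(n),ŷ(1),…,ŷ(n))` where `ŷ(i) = prox_{D(σ) f^*}(y(i) + D(σ)Ax(i))`,
`ȳ(i)` changes only block `i` of `y(i)` to `y(i)_i + (1 + p_i⁻¹)(ŷ(i)_i − y(i)_i)`,
and `x̂(i) = prox_{τ g}(x(i) − τ A^⊤ ȳ(i))`.  If `x̂(i) = x(i)` and `ŷ(i) = y(i)`
for all `i`, then each `(x(i), y(i))` satisfies `0 ∈ A^⊤ y(i) + ∂g(x(i))` and
`0 ∈ A x(i) − ∂f^*(y(i))`. -/
theorem spdhg_fixed_points_are_solutions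
    {X : Type*} [NormedAddCommGroup X] [InnerProductSpace ℝ X] [FiniteDimensional ℝ X]
    {n : ℕ} {Y : Fin n → Type*} [∀ i, NormedAddCommGroup (Y i)]
    [∀ i, InnerProductSpace ℝ (Y i)] [∀ i, FiniteDimensional ℝ (Y i)]
    (g : X → ℝ) (fstar : ∀ i, Y i → ℝ)
    (hg : ConvexOn ℝ Set.univ g) (hfs : ∀ i, ConvexOn ℝ Set.univ (fstar i))
    (A : ∀ i, X →L[ℝ] Y i)
    (p σ : Fin n → ℝ) (τ : ℝ)
    (hp : ∀ i, 0 < p i) (hpsum : ∑ i, p i = 1)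
    (hτ : 0 < τ) (hσ : ∀ i, 0 < σ i)
    (xv : Fin n → X) (yv : Fin n → ∀ j, Y j)
    (yhat : Fin n → ∀ j, Y j) (xhat : Fin n → X)
    (hyhat : ∀ i j, IsProx (σ j) (fstar j) (yv i j + σ j • A j (xv i)) (yhat i j))
    (hxhat : ∀ i, IsProx τ g
      (xv i - τ • AT A (Function.update (yv i) i
        (yv i i + (1 + (p i)⁻¹) • (yhat i i - yv i i)))) (xhat i))
    (hfixx : ∀ i, xhat i = xv i) (hfixy : ∀ i, yhat i = yv i) :
    ∀ i, (-(AT A (yv i)) ∈ subdiffAt g (xv i))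
      ∧ ∀ j, A j (xv i) ∈ subdiffAt (fstar j) (yv i j) := by
  intro i
  have hybar : Function.update (yv i) i
      (yv i i + (1 + (p i)⁻¹) • (yhat i i - yv i i)) = yv i := by
    rw [hfixy i, sub_self, smul_zero, add_zero, Function.update_eq_self]
  constructor
  · have hx := hxhat i
    rw [hybar, hfixx i] at hx
    have := prox_subdiff hτ hg hx
    have heq : τ⁻¹ • (xv i - τ • AT A (yv i) - xv i) = -(AT A (yv i)) := by
      rw [sub_sub_cancel_left, smul_neg, smul_smul, inv_mul_cancel₀ (ne_of_gt hτ), one_smul]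
    rwa [heq] at this
  · intro j
    have hy := hyhat i j
    rw [hfixy i] at hy
    have := prox_subdiff (hσ j) (hfs j) hy
    have heq : (σ j)⁻¹ • (yv i j + σ j • A j (xv i) - yv i j) = A j (xv i) := by
      rw [add_sub_cancel_left, smul_smul, inv_mul_cancel₀ (ne_of_gt (hσ j)), one_smul]
    rwa [heq] at this
end
end

section
/- Operator inclusions and distance identity (Lemma 4.4): with q^k = (1⊗x^k, 1⊗y^k), q̂^{k+1} = T(q^k) and ẑ^{k+1} = (x^{k+1}, ŷ^{k+1}), one has (H − N) q^k ∈ (B + H) q̂^{k+1} and (N − H)(q̂^{k+1} − q^k) ∈ (B + N) q̂^{k+1}; moreover E_k[dist²(0, F ẑ^{k+1})] = dist²_{P̄}(0, (B + N) q̂^{k+1}), where dist²_{P̄} weights the i-th block by p_i. -/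
noncomputable section

open Finset

local notation "⟪" x ", " y "⟫" => @inner ℝ _ _ x y

lemma prox_mem_subdiff {E : Type*} [NormedAddCommGroup E] [InnerProductSpace ℝ E]
    {t : ℝ} (ht : 0 < t) {h : E → ℝ} (hconv : ConvexOn ℝ Set.univ h)
    {u v : E} (hv : IsProx t h u v) : t⁻¹ • (u - v) ∈ subdiffAt h v := by
  intro z
  set I := ⟪v - u, z - v⟫ with hI
  set N2 := ‖z - v‖ ^ 2 with hN2
  have hN2nn : 0 ≤ N2 := by positivity
  have key : ∀ s : ℝ, 0 < s → s ≤ 1 → 2*t*(h v - h z) ≤ 2*I + s*N2 := by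
    intro s hs hs1
    have hw := hv (v + s • (z - v))
    have hcvx : h (v + s • (z - v)) ≤ (1 - s) * h v + s * h z := by
      have h2 := hconv.2 (Set.mem_univ v) (Set.mem_univ z) (by linarith : (0:ℝ) ≤ 1 - s) hs.le (by ring)
      have hpt : (1 - s) • v + s • z = v + s • (z - v) := by
        rw [smul_sub, sub_smul, one_smul]; abel
      rw [hpt] at h2
      simpa using h2
    have hnorm : ‖v + s • (z - v) - u‖ ^ 2 = ‖v - u‖ ^ 2 + 2 * s * I + s ^ 2 * N2 := by
      have he : v + s • (z - v) - u = (v - u) + s • (z - v) := by abel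
      rw [he, norm_add_sq_real, real_inner_smul_right, norm_smul]
      rw [Real.norm_eq_abs, abs_of_pos hs, mul_pow]
      ring
    rw [hnorm] at hw
    have h2t : (0:ℝ) < 2 * t := by linarith
    have h1 : h v - h (v + s • (z - v)) ≤ (2*s*I + s^2*N2)/(2*t) := by
      have heq : (‖v - u‖^2 + 2*s*I + s^2*N2)/(2*t) - ‖v - u‖^2/(2*t) = (2*s*I + s^2*N2)/(2*t) := by
        field_simp
        ring
      linarith [hw]
    have h2 : (h v - h (v + s • (z - v))) * (2*t) ≤ 2*s*I + s^2*N2 := (le_div_iff₀ h2t).mp h1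
    have h3 : s * (2*t*(h v - h z)) ≤ s * (2*I + s*N2) := by nlinarith [h2, hcvx]
    exact (mul_le_mul_iff_right₀ hs).mp h3
  have hfin : 2*t*(h v - h z) ≤ 2*I := by
    refine le_of_forall_pos_le_add ?_
    intro ε hε
    set s := min 1 (ε/(N2+1)) with hsdef
    have hspos : 0 < s := lt_min one_pos (div_pos hε (by linarith))
    have hs1 : s ≤ 1 := min_le_left _ _
    have hsN2 : s * N2 ≤ ε := by
      have hle : s ≤ ε/(N2+1) := min_le_right _ _
      have h4 : s * N2 ≤ (ε/(N2+1)) * N2 := mul_le_mul_of_nonneg_right hle hN2nn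
      have h5 : (ε/(N2+1)) * N2 ≤ ε := by
        rw [div_mul_eq_mul_div, div_le_iff₀ (by linarith : (0:ℝ) < N2+1)]
        nlinarith
      linarith
    linarith [key s hspos hs1]
  have hinner : ⟪t⁻¹ • (u - v), z - v⟫ = -(t⁻¹ * I) := by
    rw [real_inner_smul_left, show u - v = -(v - u) by abel, inner_neg_left]
    ring
  rw [hinner]
  have hle : (h v - h z) * t ≤ I := by nlinarith [hfin]
  have hd := (le_div_iff₀ ht).mpr hle
  have hdiv : I / t = t⁻¹ * I := by ring
  linarith [hdiv ▸ hd]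

lemma AT_sub' {X : Type*} [NormedAddCommGroup X] [InnerProductSpace ℝ X] [CompleteSpace X]
    {n : ℕ} {Y : Fin n → Type*} [∀ i, NormedAddCommGroup (Y i)]
    [∀ i, InnerProductSpace ℝ (Y i)] [∀ i, CompleteSpace (Y i)]
    (A : ∀ i, X →L[ℝ] Y i) (y1 y2 : ∀ i, Y i) :
    AT A (y1 - y2) = AT A y1 - AT A y2 := by
  simp [AT, map_sub, Finset.sum_sub_distrib]

lemma AT_update' {X : Type*} [NormedAddCommGroup X] [InnerProductSpace ℝ X] [CompleteSpace X]
    {n : ℕ} {Y : Fin n → Type*} [∀ i, NormedAddCommGroup (Y i)]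
    [∀ i, InnerProductSpace ℝ (Y i)] [∀ i, CompleteSpace (Y i)]
    (A : ∀ i, X →L[ℝ] Y i) (y : ∀ i, Y i) (i : Fin n) (w : Y i) :
    AT A (Function.update y i w) = AT A y + (A i).adjoint (w - y i) := by
  have hfun : ∀ j, (A j).adjoint (Function.update y i w j) =
      (A j).adjoint (y j) + (if j = i then (A i).adjoint (w - y i) else 0) := by
    intro j
    by_cases hj : j = i
    · subst hj; simp [map_sub]
    · simp [Function.update_of_ne hj, hj]
  simp [AT, hfun, Finset.sum_add_distrib]

/-- Operator inclusions and distance identity (Lemma 4.4).  With the duplicated current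
iterate `q^k = (1⊗x^k, 1⊗y^k)` and `q̂^{k+1} = T(q^k)` (so `q̂^{k+1} = ((x̂(i))_i, (ŷ)_i)`
with `ŷ = yh` the full dual update and `x̂(i) = xhat i`), one has, componentwise,
`(H − N) q^k ∈ (B + H) q̂^{k+1}` and `(N − H)(q̂^{k+1} − q^k) ∈ (B + N) q̂^{k+1}`;
moreover `E_k[dist²(0, F ẑ^{k+1})] = dist²_{P̄}(0, (B + N) q̂^{k+1})`, where
`ẑ^{k+1} = (x^{k+1}, ŷ^{k+1}) = (x̂(i_k), ŷ)`, `F(x,y) = (∂g(x) + A^⊤y) × (∂f^*(y) − Ax)`,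
and `dist²_{P̄}` weights block `i` by `p_i`. -/
theorem spdhg_operator_inclusions_and_distance_identity
    {X : Type*} [NormedAddCommGroup X] [InnerProductSpace ℝ X] [FiniteDimensional ℝ X]
    {n : ℕ} {Y : Fin n → Type*} [∀ i, NormedAddCommGroup (Y i)]
    [∀ i, InnerProductSpace ℝ (Y i)] [∀ i, FiniteDimensional ℝ (Y i)]
    (g : X → ℝ) (fstar : ∀ i, Y i → ℝ)
    (hg : ConvexOn ℝ Set.univ g) (hfs : ∀ i, ConvexOn ℝ Set.univ (fstar i))
    (A : ∀ i, X →L[ℝ] Y i)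
    (p σ : Fin n → ℝ) (τ : ℝ)
    (hp : ∀ i, 0 < p i) (hpsum : ∑ i, p i = 1)
    (hτ : 0 < τ) (hσ : ∀ i, 0 < σ i)
    -- current iterate (x^k, y^k) and the components of q̂^{k+1} = T(1⊗x^k, 1⊗y^k)
    (xk : X) (yk : ∀ j, Y j) (yh : ∀ j, Y j)
    (hyh : ∀ j, IsProx (σ j) (fstar j) (yk j + σ j • A j xk) (yh j))
    (xhat : Fin n → X)
    (hxhat : ∀ i, IsProx τ g
      (xk - τ • AT A (Function.update yk i
        (yk i + (1 + (p i)⁻¹) • (yh i - yk i)))) (xhat i)) :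
    -- (H − N) q^k ∈ (B + H) q̂^{k+1}
    ((∀ i, (τ⁻¹ • xk + (1 + (p i)⁻¹) • (A i).adjoint (yk i) - AT A yk)
        - (τ⁻¹ • xhat i + (1 + (p i)⁻¹) • (A i).adjoint (yh i))
        ∈ subdiffAt g (xhat i))
      ∧ (∀ j, ((σ j)⁻¹ • yk j + A j xk) - (σ j)⁻¹ • yh j
          ∈ subdiffAt (fstar j) (yh j)))
    ∧
    -- (N − H)(q̂^{k+1} − q^k) ∈ (B + N) q̂^{k+1}
    ((∀ i, (AT A (yh - yk) - τ⁻¹ • (xhat i - xk)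
          - (1 + (p i)⁻¹) • (A i).adjoint (yh i - yk i))
        - AT A yh ∈ subdiffAt g (xhat i))
      ∧ (∀ i j, (-(A j (xhat i - xk)) - (σ j)⁻¹ • (yh j - yk j)) - (-(A j (xhat i)))
          ∈ subdiffAt (fstar j) (yh j)))
    ∧
    -- E_k[dist²(0, F ẑ^{k+1})] = dist²_{P̄}(0, (B + N) q̂^{k+1})
    ((∑ i, p i * sInf {r : ℝ | ∃ u ∈ subdiffAt g (xhat i), ∃ v : ∀ j, Y j,
        (∀ j, v j ∈ subdiffAt (fstar j) (yh j)) ∧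
        r = ‖u + AT A yh‖ ^ 2 + ∑ j, ‖v j - A j (xhat i)‖ ^ 2})
      = sInf {r : ℝ | ∃ u : Fin n → X, ∃ v : Fin n → ∀ j, Y j,
          (∀ i, u i ∈ subdiffAt g (xhat i)) ∧
          (∀ i j, v i j ∈ subdiffAt (fstar j) (yh j)) ∧
          r = ∑ i, p i * (‖u i + AT A yh‖ ^ 2 + ∑ j, ‖v i j - A j (xhat i)‖ ^ 2)}) := by
  classical
  have hdual : ∀ j, ((σ j)⁻¹ • yk j + A j xk) - (σ j)⁻¹ • yh j
      ∈ subdiffAt (fstar j) (yh j) := by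
    intro j
    have h1 := prox_mem_subdiff (hσ j) (hfs j) (hyh j)
    have he : (σ j)⁻¹ • (yk j + σ j • A j xk - yh j)
        = ((σ j)⁻¹ • yk j + A j xk) - (σ j)⁻¹ • yh j := by
      rw [smul_sub, smul_add, inv_smul_smul₀ (hσ j).ne']
    rwa [he] at h1
  have hprim : ∀ i, (τ⁻¹ • xk + (1 + (p i)⁻¹) • (A i).adjoint (yk i) - AT A yk)
      - (τ⁻¹ • xhat i + (1 + (p i)⁻¹) • (A i).adjoint (yh i)) ∈ subdiffAt g (xhat i) := by
    intro i
    have h1 := prox_mem_subdiff hτ hg (hxhat i)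
    have he : τ⁻¹ • (xk - τ • AT A (Function.update yk i
          (yk i + (1 + (p i)⁻¹) • (yh i - yk i))) - xhat i)
        = (τ⁻¹ • xk + (1 + (p i)⁻¹) • (A i).adjoint (yk i) - AT A yk)
          - (τ⁻¹ • xhat i + (1 + (p i)⁻¹) • (A i).adjoint (yh i)) := by
      simp only [AT_update', add_sub_cancel_left, map_smul, map_sub]
      match_scalars <;> (field_simp; try ring)
    rwa [he] at h1
  have hprim2 : ∀ i, (AT A (yh - yk) - τ⁻¹ • (xhat i - xk)
        - (1 + (p i)⁻¹) • (A i).adjoint (yh i - yk i))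
      - AT A yh ∈ subdiffAt g (xhat i) := by
    intro i
    have h1 := prox_mem_subdiff hτ hg (hxhat i)
    have he : τ⁻¹ • (xk - τ • AT A (Function.update yk i
          (yk i + (1 + (p i)⁻¹) • (yh i - yk i))) - xhat i)
        = (AT A (yh - yk) - τ⁻¹ • (xhat i - xk)
          - (1 + (p i)⁻¹) • (A i).adjoint (yh i - yk i)) - AT A yh := by
      simp only [AT_sub', AT_update', add_sub_cancel_left, map_smul, map_sub]
      match_scalars <;> (field_simp; try ring)
    rwa [he] at h1
  have hdual2 : ∀ (i : Fin n) j,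
      (-(A j (xhat i - xk)) - (σ j)⁻¹ • (yh j - yk j)) - (-(A j (xhat i)))
      ∈ subdiffAt (fstar j) (yh j) := by
    intro i j
    have h1 := hdual j
    have he : (-(A j (xhat i - xk)) - (σ j)⁻¹ • (yh j - yk j)) - (-(A j (xhat i)))
        = ((σ j)⁻¹ • yk j + A j xk) - (σ j)⁻¹ • yh j := by
      simp only [map_sub]
      match_scalars <;> (field_simp; try ring)
    rwa [he]
  refine ⟨⟨hprim, hdual⟩, ⟨hprim2, hdual2⟩, ?_⟩
  set v0 : ∀ j, Y j := fun j => ((σ j)⁻¹ • yk j + A j xk) - (σ j)⁻¹ • yh j with hv0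
  set u0 : Fin n → X := fun i =>
      (τ⁻¹ • xk + (1 + (p i)⁻¹) • (A i).adjoint (yk i) - AT A yk)
      - (τ⁻¹ • xhat i + (1 + (p i)⁻¹) • (A i).adjoint (yh i)) with hu0
  set S : Fin n → Set ℝ := fun i => {r : ℝ | ∃ u ∈ subdiffAt g (xhat i), ∃ v : ∀ j, Y j,
      (∀ j, v j ∈ subdiffAt (fstar j) (yh j)) ∧
      r = ‖u + AT A yh‖ ^ 2 + ∑ j, ‖v j - A j (xhat i)‖ ^ 2} with hSdef
  set T : Set ℝ := {r : ℝ | ∃ u : Fin n → X, ∃ v : Fin n → ∀ j, Y j,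
      (∀ i, u i ∈ subdiffAt g (xhat i)) ∧
      (∀ i j, v i j ∈ subdiffAt (fstar j) (yh j)) ∧
      r = ∑ i, p i * (‖u i + AT A yh‖ ^ 2 + ∑ j, ‖v i j - A j (xhat i)‖ ^ 2)} with hTdef
  have hSne : ∀ i, (S i).Nonempty := fun i =>
    ⟨_, u0 i, hprim i, v0, hdual, rfl⟩
  have hSbdd : ∀ i, BddBelow (S i) := by
    intro i
    refine ⟨0, ?_⟩
    rintro r ⟨u, hu, v, hv, rfl⟩
    positivity
  have hTne : T.Nonempty := ⟨_, u0, fun _ => v0, hprim, fun _ j => hdual j, rfl⟩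
  have hTbdd : BddBelow T := by
    refine ⟨0, ?_⟩
    rintro r ⟨u, v, hu, hv, rfl⟩
    refine Finset.sum_nonneg fun i _ => mul_nonneg (hp i).le ?_
    positivity
  apply le_antisymm
  · refine le_csInf hTne ?_
    rintro r ⟨u, v, hu, hv, rfl⟩
    refine Finset.sum_le_sum fun i _ => ?_
    exact mul_le_mul_of_nonneg_left (csInf_le (hSbdd i) ⟨u i, hu i, v i, hv i, rfl⟩) (hp i).le
  · refine le_of_forall_pos_le_add ?_
    intro ε hε
    have hch : ∀ i, ∃ r ∈ S i, r < sInf (S i) + ε := fun i =>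
      exists_lt_of_csInf_lt (hSne i) (lt_add_of_pos_right _ hε)
    choose r hrmem hrlt using hch
    simp only [hSdef, Set.mem_setOf_eq] at hrmem
    choose u hu v hv hr using hrmem
    have hmemT : (∑ i, p i * r i) ∈ T :=
      ⟨u, v, hu, hv, Finset.sum_congr rfl fun i _ => by rw [hr i]⟩
    calc sInf T ≤ ∑ i, p i * r i := csInf_le hTbdd hmemT
      _ ≤ ∑ i, p i * (sInf (S i) + ε) :=
          Finset.sum_le_sum fun i _ => mul_le_mul_of_nonneg_left (hrlt i).le (hp i).le
      _ = ∑ i, p i * sInf (S i) + ε := by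
          simp only [mul_add, Finset.sum_add_distrib, ← Finset.sum_mul, hpsum, one_mul]
end
end

section
/- Variance bound and zero conditional mean for the dual correction sequence (Lemma 4.8, (4.22)): with v^{k+1} = y^k − ŷ^{k+1} − P^{-1}(y^k − y^{k+1}) defined from the SPDHG iterates, one has E_k[v^{k+1}] = 0 for every k ≥ 1, and for every K ≥ 1 and any fixed primal-dual solution z^* = (x^*, y^*), E[Σ_{k=1}^K ½‖v^{k+1}‖²_{D(σ)^{-1}P}] ≤ Δ^0 / C_1, where C_1 = 1 − γ and Δ^0 = V_1(x^0 − x^*, y^1 − y^*). -/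
noncomputable section

open Finset

local notation "⟪" x ", " y "⟫" => @inner ℝ _ _ x y

/-- Expectation over the i.i.d. random indices `i_1 = ω 0, i_2 = ω 1, …` with
`ℙ(i_k = i) = p i`, of a quantity depending only on the first `K` indices:
the `p`-weighted sum over all histories of length `K` (extended by `i0` beyond `K`). -/
def Exp {n : ℕ} (i0 : Fin n) (p : Fin n → ℝ) (K : ℕ) (f : (ℕ → Fin n) → ℝ) : ℝ :=
  ∑ t : Fin K → Fin n, (∏ j, p (t j)) * f (fun m => if h : m < K then t ⟨m, h⟩ else i0)

set_option linter.unusedVariables false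
set_option linter.unusedSectionVars false

section ProxLemmas
variable {E : Type*} [NormedAddCommGroup E] [InnerProductSpace ℝ E]

lemma IsProx.subgrad {t : ℝ} {h : E → ℝ} {u v : E} (hp : IsProx t h u v)
    (hc : ConvexOn ℝ Set.univ h) (ht : 0 < t) (w : E) :
    h v + ⟪u - v, w - v⟫ / t ≤ h w := by
  refine le_of_forall_pos_le_add fun ε hε => ?_
  set d := w - v with hd
  have huv : ⟪u - v, d⟫ = - ⟪v - u, d⟫ := by
    have : u - v = -(v - u) := by abel
    rw [this, inner_neg_left]
  set I : ℝ := ⟪v - u, d⟫ with hI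
  set N : ℝ := ‖d‖ ^ 2 with hN
  have hN0 : 0 ≤ N := by positivity
  have hden : (0:ℝ) < N + 1 := by linarith
  set s : ℝ := min 1 (2 * t * ε / (N + 1)) with hs
  have hs0 : 0 < s := lt_min one_pos (by positivity)
  have hs1 : s ≤ 1 := min_le_left _ _
  have h2t : (0:ℝ) < 2 * t := by linarith
  have hconv : h (v + s • d) ≤ (1 - s) * h v + s * h w := by
    have := hc.2 (Set.mem_univ v) (Set.mem_univ w) (by linarith : (0:ℝ) ≤ 1 - s)
      hs0.le (by ring : (1 - s) + s = 1)
    have hvd : (1 - s) • v + s • w = v + s • d := by rw [hd]; module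
    rw [hvd] at this
    simpa [smul_eq_mul] using this
  have hnorm : ‖v + s • d - u‖ ^ 2 = ‖v - u‖ ^ 2 + (2 * s * I + s ^ 2 * N) := by
    have e : v + s • d - u = (v - u) + s • d := by abel
    rw [e, @norm_add_sq_real, real_inner_smul_right, norm_smul, Real.norm_eq_abs,
      abs_of_pos hs0, hN]
    ring
  have hproxs := hp (v + s • d)
  rw [hnorm, add_div] at hproxs
  have key : s * h v ≤ s * h w + s * ((2 * I + s * N) / (2 * t)) := by
    have e : (2 * s * I + s ^ 2 * N) / (2 * t) = s * ((2 * I + s * N) / (2 * t)) := by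
      ring
    nlinarith [hproxs, hconv]
  have key2 : h v ≤ h w + (2 * I + s * N) / (2 * t) := by
    have := (mul_le_mul_iff_right₀ hs0).mp (by linarith : s * h v ≤ s * (h w + (2 * I + s * N) / (2 * t)))
    linarith [this]
  have esplit : (2 * I + s * N) / (2 * t) = I / t + s * N / (2 * t) := by
    field_simp
  have hsε : s * N / (2 * t) ≤ ε := by
    have hsle : s ≤ 2 * t * ε / (N + 1) := min_le_right _ _
    rw [div_le_iff₀ h2t]
    have h1 : s * N ≤ (2 * t * ε / (N + 1)) * N := mul_le_mul_of_nonneg_right hsle hN0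
    have h2 : (2 * t * ε / (N + 1)) * N ≤ ε * (2 * t) := by
      rw [div_mul_eq_mul_div, div_le_iff₀ hden]
      nlinarith [hε.le, h2t.le]
    linarith
  rw [huv]
  have : - I / t = - (I / t) := by ring
  rw [this]
  rw [esplit] at key2
  linarith

lemma IsProx.unique {t : ℝ} {h : E → ℝ} {u v v' : E} (hp : IsProx t h u v)
    (hp' : IsProx t h u v') (hc : ConvexOn ℝ Set.univ h) (ht : 0 < t) : v = v' := by
  have h1 := hp.subgrad hc ht v'
  have h2 := hp'.subgrad hc ht v
  have hsum : ⟪u - v, v' - v⟫ + ⟪u - v', v - v'⟫ = ‖v' - v‖ ^ 2 := by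
    have e : ⟪u - v', v - v'⟫ = - ⟪u - v', v' - v⟫ := by
      have : v - v' = -(v' - v) := by abel
      rw [this, inner_neg_right]
    rw [e, ← sub_eq_add_neg, ← inner_sub_left]
    have : u - v - (u - v') = v' - v := by abel
    rw [this, real_inner_self_eq_norm_sq]
  have hle : ‖v' - v‖ ^ 2 / t ≤ 0 := by
    rw [← hsum, add_div]; linarith
  have hzero : ‖v' - v‖ ^ 2 = 0 := by
    have hn : 0 ≤ ‖v' - v‖ ^ 2 := by positivity
    by_contra hne
    have hpos : 0 < ‖v' - v‖ ^ 2 := lt_of_le_of_ne hn (Ne.symm hne)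
    have : 0 < ‖v' - v‖ ^ 2 / t := div_pos hpos ht
    linarith
  have : v' - v = 0 := by
    have := pow_eq_zero_iff (n := 2) (by norm_num) |>.mp hzero
    exact norm_eq_zero.mp this
  have := sub_eq_zero.mp this
  exact this.symm

end ProxLemmas

section Helpers
variable {E : Type*} [NormedAddCommGroup E] [InnerProductSpace ℝ E]

lemma polar (a b c : E) : ⟪a - b, c - b⟫ = (‖a - b‖ ^ 2 + ‖c - b‖ ^ 2 - ‖a - c‖ ^ 2) / 2 := by
  have h := @norm_sub_sq_real E _ _ (a - b) (c - b)
  have e : a - b - (c - b) = a - c := by abel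
  rw [e] at h
  linarith

variable {X : Type*} [NormedAddCommGroup X] [InnerProductSpace ℝ X] [CompleteSpace X]
  {n : ℕ} {Y : Fin n → Type*} [∀ i, NormedAddCommGroup (Y i)]
  [∀ i, InnerProductSpace ℝ (Y i)] [∀ i, CompleteSpace (Y i)]

lemma AT_inner (A : ∀ i, X →L[ℝ] Y i) (z : ∀ i, Y i) (q : X) :
    ⟪AT A z, q⟫ = ∑ j, ⟪A j q, z j⟫ := by
  rw [AT, sum_inner]
  congr 1; ext j
  rw [ContinuousLinearMap.adjoint_inner_left, real_inner_comm]

lemma avg_ite (p : Fin n → ℝ) (hpsum : ∑ i, p i = 1) (j : Fin n) (a b : ℝ) :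
    ∑ i, p i * (if j = i then a else b) = p j * a + (1 - p j) * b := by
  have h : ∀ i, p i * (if j = i then a else b)
      = (if j = i then p i * a - p i * b else 0) + p i * b := by
    intro i; split <;> ring
  simp_rw [h, Finset.sum_add_distrib, Finset.sum_ite_eq, Finset.mem_univ, if_pos,
    ← Finset.sum_mul, hpsum]
  ring

lemma young_scalar {pj σj τ γ C a b : ℝ} (hp : 0 < pj) (hσ : 0 < σj) (hτ : 0 < τ)
    (hγ : 0 < γ) (hC : 0 ≤ C) (hstep : pj⁻¹ * τ * σj * C ^ 2 ≤ γ ^ 2)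
    (ha : 0 ≤ a) (hb : 0 ≤ b) :
    pj⁻¹ * (C * a * b) ≤ γ * ((1/2) * τ⁻¹ * a ^ 2 + (2 * σj * pj)⁻¹ * b ^ 2) := by
  set u : ℝ := (1/2) * τ⁻¹ * a ^ 2 with hu
  set v : ℝ := (2 * σj * pj)⁻¹ * b ^ 2 with hv
  have hu0 : 0 ≤ u := by positivity
  have hv0 : 0 ≤ v := by
    have h2 : (0:ℝ) < 2 * σj * pj := by positivity
    exact mul_nonneg (inv_nonneg.mpr h2.le) (by positivity)
  have hC2 : C ^ 2 ≤ γ ^ 2 * pj / (τ * σj) := by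
    rw [le_div_iff₀ (by positivity)]
    calc C ^ 2 * (τ * σj) = (pj⁻¹ * τ * σj * C ^ 2) * pj := by
          field_simp
      _ ≤ γ ^ 2 * pj := by nlinarith
  have huv : 4 * u * v = (a * b) ^ 2 * (τ * σj * pj)⁻¹ := by
    rw [hu, hv]
    field_simp
    ring
  have h1 : (pj⁻¹ * (C * a * b)) ^ 2 ≤ γ ^ 2 * ((a * b) ^ 2 * (τ * σj * pj)⁻¹) := by
    have e1 : (pj⁻¹ * (C * a * b)) ^ 2 = C ^ 2 * ((a*b) ^ 2 * (pj⁻¹)^2) := by ring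
    have e2 : γ ^ 2 * ((a * b) ^ 2 * (τ * σj * pj)⁻¹)
        = (γ ^ 2 * pj / (τ * σj)) * ((a*b) ^ 2 * (pj⁻¹)^2) := by
      field_simp
    rw [e1, e2]
    exact mul_le_mul_of_nonneg_right hC2 (by positivity)
  have h4 : γ ^ 2 * ((a * b) ^ 2 * (τ * σj * pj)⁻¹) ≤ (γ * (u + v)) ^ 2 := by
    rw [← huv]
    nlinarith [sq_nonneg (u - v), sq_nonneg γ]
  have key : (pj⁻¹ * (C * a * b)) ^ 2 ≤ (γ * (u + v)) ^ 2 := le_trans h1 h4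
  have hrhs : 0 ≤ γ * (u + v) := by positivity
  nlinarith [key, hrhs]

lemma young_j (A : ∀ i, X →L[ℝ] Y i) (p σ : Fin n → ℝ) (τ γ : ℝ)
    (hp : ∀ i, 0 < p i) (hτ : 0 < τ) (hσ : ∀ i, 0 < σ i) (hγ0 : 0 < γ)
    (hstep : ∀ i, (p i)⁻¹ * τ * σ i * ‖A i‖ ^ 2 ≤ γ ^ 2)
    (j : Fin n) (u : X) (wj : Y j) :
    (p j)⁻¹ * ⟪A j u, wj⟫ ≤ γ * ((1/2) * τ⁻¹ * ‖u‖ ^ 2 + (2 * σ j * p j)⁻¹ * ‖wj‖ ^ 2) := by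
  have h1 : ⟪A j u, wj⟫ ≤ ‖A j‖ * ‖u‖ * ‖wj‖ := by
    calc ⟪A j u, wj⟫ ≤ ‖A j u‖ * ‖wj‖ := real_inner_le_norm _ _
      _ ≤ ‖A j‖ * ‖u‖ * ‖wj‖ :=
        mul_le_mul_of_nonneg_right ((A j).le_opNorm u) (norm_nonneg _)
  have h2 : (p j)⁻¹ * ⟪A j u, wj⟫ ≤ (p j)⁻¹ * (‖A j‖ * ‖u‖ * ‖wj‖) :=
    mul_le_mul_of_nonneg_left h1 (inv_nonneg.mpr (hp j).le)
  calc (p j)⁻¹ * ⟪A j u, wj⟫ ≤ (p j)⁻¹ * (‖A j‖ * ‖u‖ * ‖wj‖) := h2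
    _ ≤ _ := young_scalar (hp j) (hσ j) hτ hγ0 (norm_nonneg _) (hstep j)
          (norm_nonneg _) (norm_nonneg _)

lemma young_sum (A : ∀ i, X →L[ℝ] Y i) (p σ : Fin n → ℝ) (τ γ : ℝ)
    (hp : ∀ i, 0 < p i) (hτ : 0 < τ) (hσ : ∀ i, 0 < σ i) (hγ0 : 0 < γ)
    (hstep : ∀ i, (p i)⁻¹ * τ * σ i * ‖A i‖ ^ 2 ≤ γ ^ 2)
    (u : X) (w : ∀ j, Y j) (jstar : Fin n) (hsupp : ∀ j, j ≠ jstar → w j = 0) :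
    ∑ j, (p j)⁻¹ * ⟪A j u, w j⟫
      ≤ γ * ((1/2) * τ⁻¹ * ‖u‖ ^ 2 + ∑ j, (2 * σ j * p j)⁻¹ * ‖w j‖ ^ 2) := by
  have hsum : ∑ j, (p j)⁻¹ * ⟪A j u, w j⟫ = (p jstar)⁻¹ * ⟪A jstar u, w jstar⟫ := by
    rw [Finset.sum_eq_single jstar]
    · intro b _ hb; rw [hsupp b hb, inner_zero_right]; ring
    · intro h; exact absurd (Finset.mem_univ jstar) h
  rw [hsum]
  calc (p jstar)⁻¹ * ⟪A jstar u, w jstar⟫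
      ≤ γ * ((1/2) * τ⁻¹ * ‖u‖ ^ 2 + (2 * σ jstar * p jstar)⁻¹ * ‖w jstar‖ ^ 2) :=
        young_j A p σ τ γ hp hτ hσ hγ0 hstep jstar u (w jstar)
    _ ≤ _ := by
        have : (2 * σ jstar * p jstar)⁻¹ * ‖w jstar‖ ^ 2
            ≤ ∑ j, (2 * σ j * p j)⁻¹ * ‖w j‖ ^ 2 := by
          apply Finset.single_le_sum (f := fun j => (2 * σ j * p j)⁻¹ * ‖w j‖ ^ 2)
            (fun j _ => mul_nonneg (inv_nonneg.mpr (by nlinarith [hσ j, hp j]))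
              (pow_nonneg (norm_nonneg _) 2)) (Finset.mem_univ jstar)
        have hγle := hγ0.le
        nlinarith [this]

end Helpers

section Pot
variable {X : Type*} [NormedAddCommGroup X] [InnerProductSpace ℝ X] [CompleteSpace X]
  {n : ℕ} {Y : Fin n → Type*} [∀ i, NormedAddCommGroup (Y i)]
  [∀ i, InnerProductSpace ℝ (Y i)] [∀ i, CompleteSpace (Y i)]

/-- The potential `Ŵ = V − (1−γ)S`. -/
def Pot (A : ∀ i, X →L[ℝ] Y i) (p σ : Fin n → ℝ) (τ γ : ℝ) (xstar : X) (ystar : ∀ j, Y j)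
    (x : X) (ynext w : ∀ j, Y j) : ℝ :=
  (1/2) * τ⁻¹ * ‖x - xstar‖ ^ 2 - (∑ j, (p j)⁻¹ * ⟪A j (x - xstar), w j⟫)
  + γ * ∑ j, (2 * σ j * p j)⁻¹ * ‖w j‖ ^ 2
  + ∑ j, (2 * σ j * p j)⁻¹ * ‖ynext j - ystar j‖ ^ 2

lemma pot_nonneg (A : ∀ i, X →L[ℝ] Y i) (p σ : Fin n → ℝ) (τ γ : ℝ)
    (hp : ∀ i, 0 < p i) (hτ : 0 < τ) (hσ : ∀ i, 0 < σ i) (hγ0 : 0 < γ) (hγ1 : γ < 1)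
    (hstep : ∀ i, (p i)⁻¹ * τ * σ i * ‖A i‖ ^ 2 ≤ γ ^ 2)
    (xstar : X) (ystar : ∀ j, Y j) (x : X) (ynext w : ∀ j, Y j)
    (jstar : Fin n) (hsupp : ∀ j, j ≠ jstar → w j = 0) :
    0 ≤ Pot A p σ τ γ xstar ystar x ynext w := by
  have hy := young_sum A p σ τ γ hp hτ hσ hγ0 hstep (x - xstar) w jstar hsupp
  rw [Pot]
  have h1 : (0:ℝ) ≤ (1/2) * τ⁻¹ * ‖x - xstar‖ ^ 2 := by positivity
  have h2 : (0:ℝ) ≤ ∑ j, (2 * σ j * p j)⁻¹ * ‖w j‖ ^ 2 :=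
    Finset.sum_nonneg fun j _ => mul_nonneg (inv_nonneg.mpr (by nlinarith [hσ j, hp j]))
      (pow_nonneg (norm_nonneg _) 2)
  have h3 : (0:ℝ) ≤ ∑ j, (2 * σ j * p j)⁻¹ * ‖ynext j - ystar j‖ ^ 2 :=
    Finset.sum_nonneg fun j _ => mul_nonneg (inv_nonneg.mpr (by nlinarith [hσ j, hp j]))
      (pow_nonneg (norm_nonneg _) 2)
  nlinarith [hy]
end Pot

section Step
variable {X : Type*} [NormedAddCommGroup X] [InnerProductSpace ℝ X] [CompleteSpace X]
  {n : ℕ} {Y : Fin n → Type*} [∀ i, NormedAddCommGroup (Y i)]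
  [∀ i, InnerProductSpace ℝ (Y i)] [∀ i, CompleteSpace (Y i)]

lemma coef_identity (P S γ a b c d : ℝ) (hP : P ≠ 0) (hS : S ≠ 0) :
    P * (-(P⁻¹ * a) + γ * ((2 * S * P)⁻¹ * b) + (2 * S * P)⁻¹ * c
        + (1 - γ) * ((1/2) * ((P / S) * ((1 - P⁻¹) ^ 2 * b))))
      + (1 - P) * ((2 * S * P)⁻¹ * d + (1 - γ) * ((1/2) * ((P / S) * b)))
    = -a + (γ * (2 * S)⁻¹ + (1 - γ) * (1 - P) * (2 * S)⁻¹) * b + (2 * S)⁻¹ * c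
      + ((2 * S * P)⁻¹ * d - (2 * S)⁻¹ * d) := by
  field_simp
  ring

set_option maxHeartbeats 1000000 in
lemma step_det (g : X → ℝ) (fstar : ∀ i, Y i → ℝ)
    (hg : ConvexOn ℝ Set.univ g) (hfs : ∀ i, ConvexOn ℝ Set.univ (fstar i))
    (A : ∀ i, X →L[ℝ] Y i) (p σ : Fin n → ℝ) (τ γ : ℝ)
    (hp : ∀ i, 0 < p i) (hpsum : ∑ i, p i = 1)
    (hτ : 0 < τ) (hσ : ∀ i, 0 < σ i) (hγ0 : 0 < γ) (hγ1 : γ < 1)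
    (hstep : ∀ i, (p i)⁻¹ * τ * σ i * ‖A i‖ ^ 2 ≤ γ ^ 2)
    (xstar : X) (ystar : ∀ j, Y j)
    (hsolx : ∀ z, g xstar + ⟪-(AT A ystar), z - xstar⟫ ≤ g z)
    (hsoly : ∀ j, ∀ z, fstar j (ystar j) + ⟪A j xstar, z - ystar j⟫ ≤ fstar j z)
    (xb x : X) (yp y yh : ∀ j, Y j) (jstar : Fin n)
    (hxp : IsProx τ g (xb - τ • AT A (fun j => y j + (p j)⁻¹ • (y j - yp j))) x)
    (hyp : ∀ j, IsProx (σ j) (fstar j) (y j + σ j • A j x) (yh j))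
    (hsupp : ∀ j, j ≠ jstar → y j - yp j = 0) :
    ∑ i, p i * (Pot A p σ τ γ xstar ystar x (Function.update y i (yh i))
        (fun j => Function.update y i (yh i) j - y j)
      + (1 - γ) * ((1/2) * ∑ j, (p j / σ j)
          * ‖(y j - yh j) - (p j)⁻¹ • (y j - Function.update y i (yh i) j)‖ ^ 2))
    ≤ Pot A p σ τ γ xstar ystar xb y (fun j => y j - yp j) := by
  -- named quantities
  set Q1 : ℝ := ‖x - xstar‖ ^ 2 with hQ1
  set Q0 : ℝ := ‖xb - xstar‖ ^ 2 with hQ0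
  set Qd : ℝ := ‖xb - x‖ ^ 2 with hQd
  set α : Fin n → ℝ := fun j =>
    -((p j)⁻¹ * ⟪A j (x - xstar), yh j - y j⟫)
    + γ * ((2 * σ j * p j)⁻¹ * ‖yh j - y j‖ ^ 2)
    + (2 * σ j * p j)⁻¹ * ‖yh j - ystar j‖ ^ 2
    + (1 - γ) * ((1/2) * ((p j / σ j) * ((1 - (p j)⁻¹) ^ 2 * ‖y j - yh j‖ ^ 2))) with hα
  set β : Fin n → ℝ := fun j =>
    (2 * σ j * p j)⁻¹ * ‖y j - ystar j‖ ^ 2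
    + (1 - γ) * ((1/2) * ((p j / σ j) * ‖y j - yh j‖ ^ 2)) with hβ
  -- Part A : the average equals a closed form
  have hEsum : ∀ i, Pot A p σ τ γ xstar ystar x (Function.update y i (yh i))
        (fun j => Function.update y i (yh i) j - y j)
      + (1 - γ) * ((1/2) * ∑ j, (p j / σ j)
          * ‖(y j - yh j) - (p j)⁻¹ • (y j - Function.update y i (yh i) j)‖ ^ 2)
      = (1/2) * τ⁻¹ * Q1 + ∑ j, (if j = i then α j else β j) := by
    intro i
    have hcross : ∑ j, (p j)⁻¹ * ⟪A j (x - xstar), Function.update y i (yh i) j - y j⟫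
        = ∑ j, (if j = i then (p j)⁻¹ * ⟪A j (x - xstar), yh j - y j⟫ else 0) := by
      refine Finset.sum_congr rfl fun j _ => ?_
      rcases eq_or_ne j i with rfl | hne
      · simp [Function.update_self]
      · simp [Function.update_of_ne hne, if_neg hne]
    have hw2 : ∑ j, (2 * σ j * p j)⁻¹ * ‖Function.update y i (yh i) j - y j‖ ^ 2
        = ∑ j, (if j = i then (2 * σ j * p j)⁻¹ * ‖yh j - y j‖ ^ 2 else 0) := by
      refine Finset.sum_congr rfl fun j _ => ?_
      rcases eq_or_ne j i with rfl | hne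
      · simp [Function.update_self]
      · simp [Function.update_of_ne hne, if_neg hne]
    have hy2 : ∑ j, (2 * σ j * p j)⁻¹ * ‖Function.update y i (yh i) j - ystar j‖ ^ 2
        = ∑ j, (if j = i then (2 * σ j * p j)⁻¹ * ‖yh j - ystar j‖ ^ 2
            else (2 * σ j * p j)⁻¹ * ‖y j - ystar j‖ ^ 2) := by
      refine Finset.sum_congr rfl fun j _ => ?_
      rcases eq_or_ne j i with rfl | hne
      · simp [Function.update_self]
      · simp [Function.update_of_ne hne, if_neg hne]
    have hv2 : ∑ j, (p j / σ j)
          * ‖(y j - yh j) - (p j)⁻¹ • (y j - Function.update y i (yh i) j)‖ ^ 2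
        = ∑ j, (if j = i then (p j / σ j) * ((1 - (p j)⁻¹) ^ 2 * ‖y j - yh j‖ ^ 2)
            else (p j / σ j) * ‖y j - yh j‖ ^ 2) := by
      refine Finset.sum_congr rfl fun j _ => ?_
      rcases eq_or_ne j i with rfl | hne
      · rw [Function.update_self]
        have e : (y j - yh j) - (p j)⁻¹ • (y j - yh j) = (1 - (p j)⁻¹) • (y j - yh j) := by
          rw [sub_smul, one_smul]
        rw [if_pos rfl, e, norm_smul, Real.norm_eq_abs, mul_pow, sq_abs]
      · rw [Function.update_of_ne hne, if_neg hne]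
        simp
    rw [Pot, hcross, hw2, hy2, hv2]
    have hsplit : ∑ j, (if j = i then α j else β j)
        = -(∑ j, (if j = i then (p j)⁻¹ * ⟪A j (x - xstar), yh j - y j⟫ else 0))
          + γ * (∑ j, (if j = i then (2 * σ j * p j)⁻¹ * ‖yh j - y j‖ ^ 2 else 0))
          + (∑ j, (if j = i then (2 * σ j * p j)⁻¹ * ‖yh j - ystar j‖ ^ 2
              else (2 * σ j * p j)⁻¹ * ‖y j - ystar j‖ ^ 2))
          + (1 - γ) * ((1/2) * ∑ j, (if j = i then (p j / σ j) * ((1 - (p j)⁻¹) ^ 2 * ‖y j - yh j‖ ^ 2)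
              else (p j / σ j) * ‖y j - yh j‖ ^ 2)) := by
      rw [Finset.mul_sum, Finset.mul_sum, Finset.mul_sum, ← Finset.sum_neg_distrib,
        ← Finset.sum_add_distrib, ← Finset.sum_add_distrib, ← Finset.sum_add_distrib]
      refine Finset.sum_congr rfl fun j _ => ?_
      rw [hα, hβ]
      split <;> ring
    rw [hsplit, hQ1]
    ring
  -- average over i
  have havg : ∑ i, p i * (Pot A p σ τ γ xstar ystar x (Function.update y i (yh i))
        (fun j => Function.update y i (yh i) j - y j)
      + (1 - γ) * ((1/2) * ∑ j, (p j / σ j)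
          * ‖(y j - yh j) - (p j)⁻¹ • (y j - Function.update y i (yh i) j)‖ ^ 2))
      = (1/2) * τ⁻¹ * Q1 + ∑ j, (p j * α j + (1 - p j) * β j) := by
    calc ∑ i, p i * (Pot A p σ τ γ xstar ystar x (Function.update y i (yh i))
            (fun j => Function.update y i (yh i) j - y j)
          + (1 - γ) * ((1/2) * ∑ j, (p j / σ j)
              * ‖(y j - yh j) - (p j)⁻¹ • (y j - Function.update y i (yh i) j)‖ ^ 2))
        = ∑ i, (p i * ((1/2) * τ⁻¹ * Q1) + p i * ∑ j, (if j = i then α j else β j)) := by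
          refine Finset.sum_congr rfl fun i _ => ?_
          rw [hEsum i]; ring
      _ = (∑ i, p i) * ((1/2) * τ⁻¹ * Q1) + ∑ j, ∑ i, p i * (if j = i then α j else β j) := by
          rw [Finset.sum_add_distrib, ← Finset.sum_mul]
          congr 1
          rw [Finset.sum_comm]
          refine Finset.sum_congr rfl fun i _ => ?_
          rw [Finset.mul_sum]
      _ = (1/2) * τ⁻¹ * Q1 + ∑ j, (p j * α j + (1 - p j) * β j) := by
          rw [hpsum, one_mul]
          congr 1
          exact Finset.sum_congr rfl fun j _ => avg_ite p hpsum j (α j) (β j)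
  rw [havg]
  simp only [Pot]
  rw [← hQ0]
  -- named sums
  set Id' : ℝ := ∑ j, ⟪A j (x - xstar), yh j - y j⟫ with hId
  set Ie : ℝ := ∑ j, ⟪A j (x - xstar), yh j - ystar j⟫ with hIe
  set Iw : ℝ := ∑ j, (p j)⁻¹ * ⟪A j (x - xstar), y j - yp j⟫ with hIw
  set Iw0 : ℝ := ∑ j, (p j)⁻¹ * ⟪A j (xb - xstar), y j - yp j⟫ with hIw0
  set Iwd : ℝ := ∑ j, (p j)⁻¹ * ⟪A j (xb - x), y j - yp j⟫ with hIwd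
  set Nd : ℝ := ∑ j, (2 * σ j)⁻¹ * ‖yh j - y j‖ ^ 2 with hNd
  set Ne' : ℝ := ∑ j, (2 * σ j)⁻¹ * ‖yh j - ystar j‖ ^ 2 with hNe
  set Nf : ℝ := ∑ j, (2 * σ j)⁻¹ * ‖y j - ystar j‖ ^ 2 with hNf
  set Nfp : ℝ := ∑ j, (2 * σ j * p j)⁻¹ * ‖y j - ystar j‖ ^ 2 with hNfp
  set Nw : ℝ := ∑ j, (2 * σ j * p j)⁻¹ * ‖y j - yp j‖ ^ 2 with hNw
  set Ndc : ℝ := ∑ j, (γ * (2 * σ j)⁻¹ + (1 - γ) * (1 - p j) * (2 * σ j)⁻¹) * ‖yh j - y j‖ ^ 2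
    with hNdc
  have hperj : ∀ j, p j * α j + (1 - p j) * β j
      = -⟪A j (x - xstar), yh j - y j⟫
        + (γ * (2 * σ j)⁻¹ + (1 - γ) * (1 - p j) * (2 * σ j)⁻¹) * ‖yh j - y j‖ ^ 2
        + (2 * σ j)⁻¹ * ‖yh j - ystar j‖ ^ 2
        + ((2 * σ j * p j)⁻¹ * ‖y j - ystar j‖ ^ 2 - (2 * σ j)⁻¹ * ‖y j - ystar j‖ ^ 2) := by
    intro j
    have hpj : (p j : ℝ) ≠ 0 := (hp j).ne'
    have hσj : (σ j : ℝ) ≠ 0 := (hσ j).ne'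
    simp only [hα, hβ]
    rw [norm_sub_rev (y j) (yh j)]
    exact coef_identity (p j) (σ j) γ _ _ _ _ hpj hσj
  have hEtot : ∑ j, (p j * α j + (1 - p j) * β j) = -Id' + Ndc + Ne' + (Nfp - Nf) := by
    rw [hId, hNdc, hNe, hNfp, hNf, ← Finset.sum_neg_distrib, ← Finset.sum_sub_distrib,
      ← Finset.sum_add_distrib, ← Finset.sum_add_distrib, ← Finset.sum_add_distrib]
    exact Finset.sum_congr rfl fun j _ => hperj j
  have hS6 : Ndc ≤ Nd := by
    rw [hNdc, hNd]
    refine Finset.sum_le_sum fun j _ => ?_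
    have h1 : (0:ℝ) < (2 * σ j)⁻¹ := by
      have := hσ j; positivity
    have h2 : (0:ℝ) ≤ ‖yh j - y j‖ ^ 2 := by positivity
    nlinarith [mul_nonneg (mul_nonneg (by linarith : (0:ℝ) ≤ 1 - γ) (hp j).le)
      (mul_nonneg h1.le h2)]
  have hS1 : Nd + Ne' - Nf ≤ Ie := by
    rw [hNd, hNe, hNf, hIe, ← Finset.sum_add_distrib, ← Finset.sum_sub_distrib]
    refine Finset.sum_le_sum fun j _ => ?_
    have hσj : (σ j : ℝ) ≠ 0 := (hσ j).ne'
    have h1 := (hyp j).subgrad (hfs j) (hσ j) (ystar j)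
    have e1 : (y j + σ j • A j x) - yh j = (y j - yh j) + σ j • A j x := by abel
    rw [e1, inner_add_left, real_inner_smul_left] at h1
    have e2 : (⟪y j - yh j, ystar j - yh j⟫ + σ j * ⟪A j x, ystar j - yh j⟫) / σ j
        = ⟪y j - yh j, ystar j - yh j⟫ / σ j + ⟪A j x, ystar j - yh j⟫ := by
      field_simp
      try ring
    rw [e2] at h1
    have h2 := hsoly j (yh j)
    have e3 : ⟪A j xstar, yh j - ystar j⟫ = -⟪A j xstar, ystar j - yh j⟫ := by
      rw [show yh j - ystar j = -(ystar j - yh j) by abel, inner_neg_right]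
    rw [e3] at h2
    have hcomb : ⟪y j - yh j, ystar j - yh j⟫ / σ j + ⟪A j (x - xstar), ystar j - yh j⟫ ≤ 0 := by
      have e4 : ⟪A j (x - xstar), ystar j - yh j⟫
          = ⟪A j x, ystar j - yh j⟫ - ⟪A j xstar, ystar j - yh j⟫ := by
        rw [map_sub, inner_sub_left]
      rw [e4]; linarith
    have e5 : ⟪A j (x - xstar), ystar j - yh j⟫ = -⟪A j (x - xstar), yh j - ystar j⟫ := by
      rw [show ystar j - yh j = -(yh j - ystar j) by abel, inner_neg_right]
    have hpol := polar (y j) (yh j) (ystar j)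
    rw [norm_sub_rev (y j) (yh j), norm_sub_rev (ystar j) (yh j)] at hpol
    rw [hpol] at hcomb
    have e6 : (‖yh j - y j‖ ^ 2 + ‖yh j - ystar j‖ ^ 2 - ‖y j - ystar j‖ ^ 2) / 2 / σ j
        = (2 * σ j)⁻¹ * ‖yh j - y j‖ ^ 2 + (2 * σ j)⁻¹ * ‖yh j - ystar j‖ ^ 2
          - (2 * σ j)⁻¹ * ‖y j - ystar j‖ ^ 2 := by
      field_simp
      try ring
    rw [← e6]
    linarith [hcomb, e5]
  have hS2 : -Id' + Ie + Iw + ((1/2) * τ⁻¹ * Qd + (1/2) * τ⁻¹ * Q1 - (1/2) * τ⁻¹ * Q0) ≤ 0 := by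
    have hτne : (τ:ℝ) ≠ 0 := hτ.ne'
    have h1 := hxp.subgrad hg hτ xstar
    set Yb : ∀ j, Y j := fun j => y j + (p j)⁻¹ • (y j - yp j) with hYb
    have e1 : (xb - τ • AT A Yb) - x = (xb - x) - τ • AT A Yb := by abel
    rw [e1, inner_sub_left, real_inner_smul_left] at h1
    have e2 : (⟪xb - x, xstar - x⟫ - τ * ⟪AT A Yb, xstar - x⟫) / τ
        = ⟪xb - x, xstar - x⟫ / τ - ⟪AT A Yb, xstar - x⟫ := by
      field_simp
    rw [e2] at h1
    have h2 := hsolx x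
    rw [inner_neg_left] at h2
    have e3 : ⟪AT A ystar, x - xstar⟫ = -⟪AT A ystar, xstar - x⟫ := by
      rw [show x - xstar = -(xstar - x) by abel, inner_neg_right]
    rw [e3, neg_neg] at h2
    have hcomb : ⟪xb - x, xstar - x⟫ / τ - ⟪AT A Yb, xstar - x⟫ + ⟪AT A ystar, xstar - x⟫ ≤ 0 := by
      linarith
    have e4 : ⟪AT A Yb, xstar - x⟫ - ⟪AT A ystar, xstar - x⟫ = Id' - Ie - Iw := by
      rw [AT_inner A Yb (xstar - x), AT_inner A ystar (xstar - x), ← Finset.sum_sub_distrib,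
        hId, hIe, hIw, ← Finset.sum_sub_distrib, ← Finset.sum_sub_distrib]
      refine Finset.sum_congr rfl fun j _ => ?_
      have ev : Yb j - ystar j = (yh j - ystar j) - (yh j - y j) + (p j)⁻¹ • (y j - yp j) := by
        simp only [hYb]; module
      have eA : A j (xstar - x) = -(A j (x - xstar)) := by
        rw [show xstar - x = -(x - xstar) by abel, map_neg]
      rw [← inner_sub_right, ev, eA, inner_neg_left, inner_add_right, inner_sub_right,
        real_inner_smul_right]
      ring
    have hpol : ⟪xb - x, xstar - x⟫ = (Qd + Q1 - Q0) / 2 := by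
      have hpp := polar xb x xstar
      rw [norm_sub_rev xstar x] at hpp
      rw [hQd, hQ1, hQ0]
      exact hpp
    rw [hpol] at hcomb
    have e5 : (Qd + Q1 - Q0) / 2 / τ
        = (1/2) * τ⁻¹ * Qd + (1/2) * τ⁻¹ * Q1 - (1/2) * τ⁻¹ * Q0 := by
      field_simp
      try ring
    rw [e5] at hcomb
    linarith [hcomb, e4]
  have hS5 : Iw = Iw0 - Iwd := by
    rw [hIw, hIw0, hIwd, ← Finset.sum_sub_distrib]
    refine Finset.sum_congr rfl fun j _ => ?_
    have e : x - xstar = (xb - xstar) - (xb - x) := by abel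
    rw [e, map_sub, inner_sub_left]
    ring
  have hS3 : Iwd ≤ γ * ((1/2) * τ⁻¹ * Qd) + γ * Nw := by
    have hy2 : Iwd ≤ γ * ((1/2) * τ⁻¹ * Qd + Nw) := by
      rw [hIwd, hQd, hNw]
      exact young_sum A p σ τ γ hp hτ hσ hγ0 hstep (xb - x) (fun j => y j - yp j) jstar hsupp
    nlinarith [hy2]
  have hgQd : γ * ((1/2) * τ⁻¹ * Qd) ≤ (1/2) * τ⁻¹ * Qd := by
    have h1 : 0 ≤ (1/2) * τ⁻¹ * Qd := by
      rw [hQd]; positivity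
    nlinarith
  linarith [hEtot, hS6, hS1, hS2, hS5, hS3, hgQd]

end Step

section ExpLemmas
variable {n : ℕ} (i0 : Fin n) (p : Fin n → ℝ)

lemma Exp_zero (f : (ℕ → Fin n) → ℝ) : Exp i0 p 0 f = f (fun _ => i0) := by
  rw [Exp]
  rw [Finset.sum_eq_single_of_mem (fun i : Fin 0 => i.elim0) (Finset.mem_univ _)
    (fun t _ ht => absurd (funext fun j => j.elim0) ht)]
  simp

lemma Exp_succ (K : ℕ) (f : (ℕ → Fin n) → ℝ) :
    Exp i0 p (K + 1) f = Exp i0 p K (fun ω => ∑ i, p i * f (Function.update ω K i)) := by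
  rw [Exp, Exp]
  simp_rw [Finset.mul_sum]
  rw [Finset.sum_comm]
  have h1 : (∑ t : Fin (K + 1) → Fin n, (∏ j : Fin (K + 1), p (t j))
        * f (fun m => if h : m < K + 1 then t ⟨m, h⟩ else i0))
      = ∑ q : Fin n × (Fin K → Fin n), (∏ j : Fin K, p (q.2 j))
          * (p q.1 * f (Function.update
            (fun m => if h : m < K then q.2 ⟨m, h⟩ else i0) K q.1)) := by
    refine (Fintype.sum_equiv (Fin.snocEquiv (fun _ => Fin n)) _ _ ?_).symm
    rintro ⟨i, t⟩
    have hsnoc : (Fin.snocEquiv (fun _ => Fin n)) (i, t) = (Fin.snoc t i : Fin (K+1) → Fin n) := rfl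
    rw [hsnoc]
    have hprod : ∏ j : Fin (K + 1), p ((Fin.snoc t i : Fin (K+1) → Fin n) j) = (∏ j : Fin K, p (t j)) * p i := by
      rw [Fin.prod_univ_castSucc]
      congr 1
      · exact Finset.prod_congr rfl fun j _ => by rw [Fin.snoc_castSucc]
      · rw [Fin.snoc_last]
    have hext : (fun m => if h : m < K + 1 then (Fin.snoc t i : Fin (K+1) → Fin n) ⟨m, h⟩ else i0)
        = Function.update (fun m => if h : m < K then t ⟨m, h⟩ else i0) K i := by
      funext m
      rcases lt_trichotomy m K with hm | rfl | hm
      · rw [dif_pos (by omega : m < K + 1), Function.update_of_ne (by omega), dif_pos hm]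
        have he : (⟨m, by omega⟩ : Fin (K + 1)) = Fin.castSucc ⟨m, hm⟩ := rfl
        rw [he, Fin.snoc_castSucc]
      · rw [dif_pos (by omega : m < m + 1), Function.update_self]
        have he : (⟨m, by omega⟩ : Fin (m + 1)) = Fin.last m := rfl
        rw [he, Fin.snoc_last]
      · rw [dif_neg (by omega), Function.update_of_ne (by omega), dif_neg (by omega)]
    rw [hprod, hext]
    ring
  rw [h1, Fintype.sum_prod_type]

lemma Exp_mono (hp : ∀ i, 0 ≤ p i) (K : ℕ) (f g : (ℕ → Fin n) → ℝ)
    (h : ∀ ω, f ω ≤ g ω) : Exp i0 p K f ≤ Exp i0 p K g :=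
  Finset.sum_le_sum fun t _ => mul_le_mul_of_nonneg_left (h _)
    (Finset.prod_nonneg fun j _ => hp _)

lemma Exp_smul (K : ℕ) (c : ℝ) (f : (ℕ → Fin n) → ℝ) :
    Exp i0 p K (fun ω => c * f ω) = c * Exp i0 p K f := by
  rw [Exp, Exp, Finset.mul_sum]
  exact Finset.sum_congr rfl fun t _ => by ring

end ExpLemmas

set_option maxHeartbeats 1000000

/-- Lemma 4.8, (4.22): with `v^{k+1} = y^k − ŷ^{k+1} − P⁻¹(y^k − y^{k+1})` defined from the
SPDHG iterates (indices `i_k = ω (k−1)`, `ℙ(i_k = i) = p i`), one has `E_k[v^{k+1}] = 0`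
for every `k ≥ 1` (the `p`-average over the value of the index `i_k`, holding the past
fixed, vanishes), and for every `K ≥ 1` and any fixed primal-dual solution `(x^*, y^*)`,
`E[∑_{k=1}^K ½‖v^{k+1}‖²_{D(σ)⁻¹P}] ≤ Δ⁰ / C₁`, where `C₁ = 1 − γ` and
`Δ⁰ = V_1(x⁰ − x^*, y¹ − y^*) = ½‖x⁰ − x^*‖²_{τ⁻¹} + ½‖y¹ − y^*‖²_{D(σ)⁻¹P⁻¹}`. -/
theorem spdhg_dual_correction_variance_bound
    {X : Type*} [NormedAddCommGroup X] [InnerProductSpace ℝ X] [FiniteDimensional ℝ X]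
    {n : ℕ} {Y : Fin n → Type*} [∀ i, NormedAddCommGroup (Y i)]
    [∀ i, InnerProductSpace ℝ (Y i)] [∀ i, FiniteDimensional ℝ (Y i)]
    (g : X → ℝ) (fstar : ∀ i, Y i → ℝ)
    (hg : ConvexOn ℝ Set.univ g) (hfs : ∀ i, ConvexOn ℝ Set.univ (fstar i))
    (A : ∀ i, X →L[ℝ] Y i)
    (p σ : Fin n → ℝ) (τ γ : ℝ)
    (hp : ∀ i, 0 < p i) (hpsum : ∑ i, p i = 1)
    (hτ : 0 < τ) (hσ : ∀ i, 0 < σ i) (hγ0 : 0 < γ) (hγ1 : γ < 1)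
    (hstep : ∀ i, (p i)⁻¹ * τ * σ i * ‖A i‖ ^ 2 ≤ γ ^ 2)
    -- a fixed primal-dual solution
    (xstar : X) (ystar : ∀ j, Y j)
    (hsolx : -(AT A ystar) ∈ subdiffAt g xstar)
    (hsoly : ∀ j, A j xstar ∈ subdiffAt (fstar j) (ystar j))
    -- SPDHG iterates, parameterized by the index sequence ω (with i_k = ω (k−1))
    (i0 : Fin n) (x0 : X) (y1 : ∀ j, Y j)
    (xs : ℕ → (ℕ → Fin n) → X) (ys yhat : ℕ → (ℕ → Fin n) → ∀ j, Y j)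
    (hx0 : ∀ ω, xs 0 ω = x0) (hy0 : ∀ ω, ys 0 ω = y1) (hy1 : ∀ ω, ys 1 ω = y1)
    (hxs : ∀ k, 1 ≤ k → ∀ ω, IsProx τ g
      (xs (k - 1) ω - τ • AT A
        (fun j => ys k ω j + (p j)⁻¹ • (ys k ω j - ys (k - 1) ω j))) (xs k ω))
    (hyhat : ∀ k, 1 ≤ k → ∀ ω j,
      IsProx (σ j) (fstar j) (ys k ω j + σ j • A j (xs k ω)) (yhat (k + 1) ω j))
    (hys : ∀ k, 1 ≤ k → ∀ ω,
      ys (k + 1) ω = Function.update (ys k ω) (ω (k - 1)) (yhat (k + 1) ω (ω (k - 1))))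
    -- the correction sequence v^{k+1}
    (v : ℕ → (ℕ → Fin n) → ∀ j, Y j)
    (hv : ∀ k, 1 ≤ k → ∀ ω j,
      v (k + 1) ω j = ys k ω j - yhat (k + 1) ω j - (p j)⁻¹ • (ys k ω j - ys (k + 1) ω j))
    -- the constants
    (C1 Δ0 : ℝ) (hC1 : C1 = 1 - γ)
    (hΔ0 : Δ0 = (1 / 2) * (τ⁻¹ * ‖x0 - xstar‖ ^ 2)
      + (1 / 2) * ∑ j, (σ j * p j)⁻¹ * ‖y1 j - ystar j‖ ^ 2) :
    -- E_k[v^{k+1}] = 0 for every k ≥ 1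
    (∀ k, 1 ≤ k → ∀ ω (j : Fin n),
      ∑ i, p i • v (k + 1) (Function.update ω (k - 1) i) j = 0)
    ∧
    -- E[∑_{k=1}^K ½‖v^{k+1}‖²_{D(σ)⁻¹P}] ≤ Δ⁰/C₁
    (∀ K, 1 ≤ K →
      Exp i0 p K (fun ω =>
        ∑ k ∈ Finset.Icc 1 K, (1 / 2) * ∑ j, (p j / σ j) * ‖v (k + 1) ω j‖ ^ 2)
      ≤ Δ0 / C1) := by
  have hsolx' : ∀ z, g xstar + ⟪-(AT A ystar), z - xstar⟫ ≤ g z := hsolx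
  have hsoly' : ∀ j z, fstar j (ystar j) + ⟪A j xstar, z - ystar j⟫ ≤ fstar j z := hsoly
  -- dependence of the iterates on the past only
  have hdep : ∀ k (ω ω' : ℕ → Fin n), (∀ m, m + 1 < k → ω m = ω' m) →
      ys k ω = ys k ω' ∧ (1 ≤ k → xs k ω = xs k ω' ∧ yhat (k + 1) ω = yhat (k + 1) ω') := by
    intro k
    induction k with
    | zero =>
        intro ω ω' _
        exact ⟨(hy0 ω).trans (hy0 ω').symm, fun h => absurd h (by norm_num)⟩
    | succ k IH =>
        intro ω ω' hagree
        have hagree' : ∀ m, m + 1 < k → ω m = ω' m := fun m hm => hagree m (by omega)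
        have hyk : ys k ω = ys k ω' := (IH ω ω' hagree').1
        have hys_eq : ys (k + 1) ω = ys (k + 1) ω' := by
          rcases Nat.eq_zero_or_pos k with rfl | hk
          · rw [hy1 ω, hy1 ω']
          · have hxyh := (IH ω ω' hagree').2 hk
            have hωk : ω (k - 1) = ω' (k - 1) := hagree (k - 1) (by omega)
            rw [hys k hk ω, hys k hk ω', hyk, hxyh.2, hωk]
        refine ⟨hys_eq, fun _ => ?_⟩
        have hxk : xs k ω = xs k ω' := by
          rcases Nat.eq_zero_or_pos k with rfl | hk
          · rw [hx0 ω, hx0 ω']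
          · exact ((IH ω ω' hagree').2 hk).1
        have hx_eq : xs (k + 1) ω = xs (k + 1) ω' := by
          have hp1 := hxs (k + 1) (by omega) ω
          have hp2 := hxs (k + 1) (by omega) ω'
          simp only [Nat.add_sub_cancel] at hp1 hp2
          rw [← hxk, ← hys_eq, ← hyk] at hp2
          exact hp1.unique hp2 hg hτ
        have hyh_eq : yhat (k + 1 + 1) ω = yhat (k + 1 + 1) ω' := by
          funext j
          have hp1 := hyhat (k + 1) (by omega) ω j
          have hp2 := hyhat (k + 1) (by omega) ω' j
          rw [← hys_eq, ← hx_eq] at hp2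
          exact hp1.unique hp2 (hfs j) (hσ j)
        exact ⟨hx_eq, hyh_eq⟩
  constructor
  · -- part 1 : zero conditional mean
    intro k hk ω j
    obtain ⟨m, rfl⟩ : ∃ m, k = m + 1 := ⟨k - 1, by omega⟩
    simp only [Nat.add_sub_cancel]
    have hups : ∀ i : Fin n,
        ys (m + 1) (Function.update ω m i) = ys (m + 1) ω
        ∧ xs (m + 1) (Function.update ω m i) = xs (m + 1) ω
        ∧ yhat (m + 1 + 1) (Function.update ω m i) = yhat (m + 1 + 1) ω := by
      intro i
      have hag : ∀ m', m' + 1 < m + 1 → Function.update ω m i m' = ω m' := by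
        intro m' hm'; exact Function.update_of_ne (by omega) _ _
      have h := hdep (m + 1) _ _ hag
      exact ⟨h.1, (h.2 (by omega)).1, (h.2 (by omega)).2⟩
    have hupd2 : ∀ i : Fin n, ys (m + 1 + 1) (Function.update ω m i)
        = Function.update (ys (m + 1) ω) i (yhat (m + 1 + 1) ω i) := by
      intro i
      have h := hys (m + 1) (by omega) (Function.update ω m i)
      have hidx : m + 1 - 1 = m := by omega
      rw [hidx] at h
      have hii : Function.update ω m i m = i := Function.update_self _ _ _
      rw [hii] at h
      rw [h, (hups i).1, (hups i).2.2]
    set d : Y j := ys (m + 1) ω j - yhat (m + 1 + 1) ω j with hd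
    have hterm : ∀ i : Fin n, p i • v (m + 1 + 1) (Function.update ω m i) j
        = p i • d - (if i = j then d else 0) := by
      intro i
      rw [hv (m + 1) (by omega) _ j, (hups i).1, (hups i).2.2, hupd2 i]
      rcases eq_or_ne i j with rfl | hne
      · rw [Function.update_self, if_pos rfl, ← hd, smul_sub, smul_smul,
          mul_inv_cancel₀ (hp i).ne', one_smul]
      · rw [Function.update_of_ne hne.symm, sub_self, smul_zero, sub_zero, if_neg hne,
          sub_zero, ← hd]
    calc ∑ i, p i • v (m + 1 + 1) (Function.update ω m i) j
        = ∑ i, (p i • d - (if i = j then d else 0)) :=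
          Finset.sum_congr rfl fun i _ => hterm i
      _ = (∑ i, p i) • d - ∑ i, (if i = j then d else 0) := by
          rw [Finset.sum_sub_distrib, Finset.sum_smul]
      _ = 0 := by
          rw [hpsum, one_smul, Finset.sum_ite_eq' Finset.univ j (fun _ => d)]
          simp
  · -- part 2 : variance bound
    intro K hK
    have main : ∀ m : ℕ,
        Exp i0 p m (fun ω => Pot A p σ τ γ xstar ystar (xs m ω) (ys (m + 1) ω)
            (fun j => ys (m + 1) ω j - ys m ω j)
          + (1 - γ) * ∑ k ∈ Finset.Icc 1 m, (1 / 2) * ∑ j, (p j / σ j) * ‖v (k + 1) ω j‖ ^ 2)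
        ≤ Δ0 := by
      intro m
      induction m with
      | zero =>
          rw [Exp_zero]
          rw [show Finset.Icc 1 0 = (∅ : Finset ℕ) from Finset.Icc_eq_empty (by omega),
            Finset.sum_empty, mul_zero, add_zero, hx0, hy0, hy1]
          apply le_of_eq
          simp only [Pot, sub_self, inner_zero_right, norm_zero, mul_zero,
            Finset.sum_const_zero, sub_zero, add_zero]
          rw [hΔ0]
          have e : ∀ j, (2 * σ j * p j)⁻¹ * ‖y1 j - ystar j‖ ^ 2
              = (1 / 2) * ((σ j * p j)⁻¹ * ‖y1 j - ystar j‖ ^ 2) := by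
            intro j
            rw [mul_assoc, mul_inv]
            ring
          rw [Finset.sum_congr rfl fun j _ => e j, ← Finset.mul_sum]
          simp only [Finset.sum_const_zero, mul_zero, add_zero, mul_inv]
          norm_num
          ring
      | succ m IH =>
          rw [Exp_succ]
          refine le_trans (Exp_mono i0 p (fun i => (hp i).le) m _ _ ?_) IH
          intro ω
          have hag : ∀ i : Fin n, ∀ m', m' + 1 < m + 1 → Function.update ω m i m' = ω m' :=
            fun i m' hm' => Function.update_of_ne (by omega) _ _
          have hdx : ∀ i, xs (m + 1) (Function.update ω m i) = xs (m + 1) ω :=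
            fun i => ((hdep (m + 1) _ _ (hag i)).2 (by omega)).1
          have hdy : ∀ i, ys (m + 1) (Function.update ω m i) = ys (m + 1) ω :=
            fun i => (hdep (m + 1) _ _ (hag i)).1
          have hdyh : ∀ i, yhat (m + 1 + 1) (Function.update ω m i) = yhat (m + 1 + 1) ω :=
            fun i => ((hdep (m + 1) _ _ (hag i)).2 (by omega)).2
          have hupd2 : ∀ i : Fin n, ys (m + 1 + 1) (Function.update ω m i)
              = Function.update (ys (m + 1) ω) i (yhat (m + 1 + 1) ω i) := by
            intro i
            have h := hys (m + 1) (by omega) (Function.update ω m i)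
            have hidx : m + 1 - 1 = m := by omega
            rw [hidx] at h
            have hii : Function.update ω m i m = i := Function.update_self _ _ _
            rw [hii] at h
            rw [h, hdy i, hdyh i]
          have hvk : ∀ k ∈ Finset.Icc 1 m, ∀ i : Fin n,
              (1 / 2 : ℝ) * ∑ j, (p j / σ j) * ‖v (k + 1) (Function.update ω m i) j‖ ^ 2
              = (1 / 2) * ∑ j, (p j / σ j) * ‖v (k + 1) ω j‖ ^ 2 := by
            intro k hk i
            obtain ⟨hk1, hk2⟩ := Finset.mem_Icc.mp hk
            have hveq : ∀ j, v (k + 1) (Function.update ω m i) j = v (k + 1) ω j := by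
              intro j
              have e1 : ys k (Function.update ω m i) = ys k ω :=
                (hdep k (Function.update ω m i) ω
                  (fun m' hm' => Function.update_of_ne (by omega) _ _)).1
              have e2 : ys (k + 1) (Function.update ω m i) = ys (k + 1) ω :=
                (hdep (k + 1) (Function.update ω m i) ω
                  (fun m' hm' => Function.update_of_ne (by omega) _ _)).1
              have e3 : yhat (k + 1) (Function.update ω m i) = yhat (k + 1) ω :=
                ((hdep k (Function.update ω m i) ω
                  (fun m' hm' => Function.update_of_ne (by omega) _ _)).2 hk1).2
              rw [hv k hk1, hv k hk1, e1, e2, e3]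
            rw [Finset.sum_congr rfl fun j _ => by rw [hveq j]]
          have hsplit : ∀ i : Fin n,
              ∑ k ∈ Finset.Icc 1 (m + 1), (1 / 2 : ℝ)
                  * ∑ j, (p j / σ j) * ‖v (k + 1) (Function.update ω m i) j‖ ^ 2
              = (∑ k ∈ Finset.Icc 1 m, (1 / 2) * ∑ j, (p j / σ j) * ‖v (k + 1) ω j‖ ^ 2)
                + (1 / 2) * ∑ j, (p j / σ j) * ‖v (m + 1 + 1) (Function.update ω m i) j‖ ^ 2 := by
            intro i
            rw [Finset.sum_Icc_succ_top (by omega : 1 ≤ m + 1)]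
            congr 1
            exact Finset.sum_congr rfl fun k hk => hvk k hk i
          have hvlast : ∀ (i : Fin n) j, v (m + 1 + 1) (Function.update ω m i) j
              = (ys (m + 1) ω j - yhat (m + 1 + 1) ω j)
                - (p j)⁻¹ • (ys (m + 1) ω j
                    - Function.update (ys (m + 1) ω) i (yhat (m + 1 + 1) ω i) j) := by
            intro i j
            rw [hv (m + 1) (by omega) _ j, hdy i, hdyh i, hupd2 i]
          obtain ⟨js, hsupp'⟩ : ∃ js : Fin n, ∀ j, j ≠ js → ys (m + 1) ω j - ys m ω j = 0 := by
            rcases Nat.eq_zero_or_pos m with rfl | hm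
            · exact ⟨i0, fun j _ => by rw [hy1, hy0, sub_self]⟩
            · refine ⟨ω (m - 1), fun j hj => ?_⟩
              rw [hys m hm ω, Function.update_of_ne hj, sub_self]
          have hxp' : IsProx τ g (xs m ω - τ • AT A
              (fun j => ys (m + 1) ω j + (p j)⁻¹ • (ys (m + 1) ω j - ys m ω j)))
              (xs (m + 1) ω) := by
            have h := hxs (m + 1) (by omega) ω
            simpa only [Nat.add_sub_cancel] using h
          have hyp' : ∀ j, IsProx (σ j) (fstar j)
              (ys (m + 1) ω j + σ j • A j (xs (m + 1) ω)) (yhat (m + 1 + 1) ω j) :=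
            fun j => hyhat (m + 1) (by omega) ω j
          have hstep_ineq := step_det g fstar hg hfs A p σ τ γ hp hpsum hτ hσ hγ0 hγ1 hstep
            xstar ystar hsolx' hsoly' (xs m ω) (xs (m + 1) ω) (ys m ω) (ys (m + 1) ω)
            (yhat (m + 1 + 1) ω) js hxp' hyp' hsupp'
          have hrw : ∀ i : Fin n,
              Pot A p σ τ γ xstar ystar (xs (m + 1) (Function.update ω m i))
                  (ys (m + 1 + 1) (Function.update ω m i))
                  (fun j => ys (m + 1 + 1) (Function.update ω m i) j
                    - ys (m + 1) (Function.update ω m i) j)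
                + (1 - γ) * ∑ k ∈ Finset.Icc 1 (m + 1), (1 / 2)
                    * ∑ j, (p j / σ j) * ‖v (k + 1) (Function.update ω m i) j‖ ^ 2
              = (Pot A p σ τ γ xstar ystar (xs (m + 1) ω)
                  (Function.update (ys (m + 1) ω) i (yhat (m + 1 + 1) ω i))
                  (fun j => Function.update (ys (m + 1) ω) i (yhat (m + 1 + 1) ω i) j
                    - ys (m + 1) ω j)
                + (1 - γ) * ((1 / 2) * ∑ j, (p j / σ j)
                    * ‖(ys (m + 1) ω j - yhat (m + 1 + 1) ω j) - (p j)⁻¹ • (ys (m + 1) ω j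
                        - Function.update (ys (m + 1) ω) i (yhat (m + 1 + 1) ω i) j)‖ ^ 2))
                + (1 - γ) * ∑ k ∈ Finset.Icc 1 m, (1 / 2)
                    * ∑ j, (p j / σ j) * ‖v (k + 1) ω j‖ ^ 2 := by
            intro i
            rw [hdx i, hupd2 i, hdy i, hsplit i]
            simp only [hvlast i]
            ring
          calc ∑ i, p i * (Pot A p σ τ γ xstar ystar (xs (m + 1) (Function.update ω m i))
                  (ys (m + 1 + 1) (Function.update ω m i))
                  (fun j => ys (m + 1 + 1) (Function.update ω m i) j
                    - ys (m + 1) (Function.update ω m i) j)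
                + (1 - γ) * ∑ k ∈ Finset.Icc 1 (m + 1), (1 / 2)
                    * ∑ j, (p j / σ j) * ‖v (k + 1) (Function.update ω m i) j‖ ^ 2)
              = ∑ i, (p i * (Pot A p σ τ γ xstar ystar (xs (m + 1) ω)
                    (Function.update (ys (m + 1) ω) i (yhat (m + 1 + 1) ω i))
                    (fun j => Function.update (ys (m + 1) ω) i (yhat (m + 1 + 1) ω i) j
                      - ys (m + 1) ω j)
                  + (1 - γ) * ((1 / 2) * ∑ j, (p j / σ j)
                      * ‖(ys (m + 1) ω j - yhat (m + 1 + 1) ω j) - (p j)⁻¹ • (ys (m + 1) ω j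
                          - Function.update (ys (m + 1) ω) i (yhat (m + 1 + 1) ω i) j)‖ ^ 2))
                + p i * ((1 - γ) * ∑ k ∈ Finset.Icc 1 m, (1 / 2)
                    * ∑ j, (p j / σ j) * ‖v (k + 1) ω j‖ ^ 2)) := by
                refine Finset.sum_congr rfl fun i _ => ?_
                rw [hrw i]
                ring
            _ = (∑ i, p i * (Pot A p σ τ γ xstar ystar (xs (m + 1) ω)
                    (Function.update (ys (m + 1) ω) i (yhat (m + 1 + 1) ω i))
                    (fun j => Function.update (ys (m + 1) ω) i (yhat (m + 1 + 1) ω i) j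
                      - ys (m + 1) ω j)
                  + (1 - γ) * ((1 / 2) * ∑ j, (p j / σ j)
                      * ‖(ys (m + 1) ω j - yhat (m + 1 + 1) ω j) - (p j)⁻¹ • (ys (m + 1) ω j
                          - Function.update (ys (m + 1) ω) i (yhat (m + 1 + 1) ω i) j)‖ ^ 2)))
                + (∑ i, p i) * ((1 - γ) * ∑ k ∈ Finset.Icc 1 m, (1 / 2)
                    * ∑ j, (p j / σ j) * ‖v (k + 1) ω j‖ ^ 2) := by
                rw [Finset.sum_add_distrib, ← Finset.sum_mul]
            _ ≤ Pot A p σ τ γ xstar ystar (xs m ω) (ys (m + 1) ω)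
                  (fun j => ys (m + 1) ω j - ys m ω j)
                + (1 - γ) * ∑ k ∈ Finset.Icc 1 m, (1 / 2)
                    * ∑ j, (p j / σ j) * ‖v (k + 1) ω j‖ ^ 2 := by
                rw [hpsum, one_mul]
                exact add_le_add hstep_ineq le_rfl
    have hfinal := main K
    have hPotnn : ∀ ω : ℕ → Fin n, 0 ≤ Pot A p σ τ γ xstar ystar (xs K ω) (ys (K + 1) ω)
        (fun j => ys (K + 1) ω j - ys K ω j) := by
      intro ω
      obtain ⟨m, rfl⟩ : ∃ m, K = m + 1 := ⟨K - 1, by omega⟩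
      refine pot_nonneg A p σ τ γ hp hτ hσ hγ0 hγ1 hstep xstar ystar _ _ _ (ω m) ?_
      intro j hj
      have h := hys (m + 1) (by omega) ω
      have hidx : m + 1 - 1 = m := by omega
      rw [hidx] at h
      rw [h, Function.update_of_ne hj, sub_self]
    have h2 : Exp i0 p K (fun ω => (1 - γ)
        * ∑ k ∈ Finset.Icc 1 K, (1 / 2) * ∑ j, (p j / σ j) * ‖v (k + 1) ω j‖ ^ 2) ≤ Δ0 := by
      refine le_trans (Exp_mono i0 p (fun i => (hp i).le) K _ _ ?_) hfinal
      intro ω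
      have := hPotnn ω
      linarith
    rw [Exp_smul] at h2
    rw [hC1, le_div_iff₀ (by linarith : (0:ℝ) < 1 - γ)]
    nlinarith [h2]
end
end
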